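/- arXiv:2412.01768 — 7 statements merged into one kernel-verified Lean document; each statement's English description precedes it below -/
import Mathlib

section
/- Let K ⊆ L be number fields, with rings of integers O_K ⊆ O_L. If ℤ is Diophantine over O_L, then ℤ is Diophantine over O_K. -/
open NumberField

/-- A subset `D` of a commutative ring `R` is Diophantine over `R` if there exist `n ∈ ℕ` and
a polynomial `p ∈ R[y, x₁, …, xₙ]` such that `D = {t : ∃ x, p (t, x) = 0}`. -/
def IsDiophantine {R : Type*} [CommRing R] (D : Set R) : Prop :=
  ∃ (n : ℕ) (p : MvPolynomial (Fin (n + 1)) R),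
    ∀ t : R, t ∈ D ↔ ∃ x : Fin n → R, MvPolynomial.eval (Fin.cons t x) p = 0

namespace DiophantineAux

open MvPolynomial

lemma hom_eval' {R S σ : Type*} [CommSemiring R] [CommSemiring S] (φ : R →+* S) (g : σ → R)
    (p : MvPolynomial σ R) : φ (eval g p) = eval (fun s => φ (g s)) (map φ p) := by
  rw [eval_map]
  exact map_eval₂Hom (RingHom.id R) g φ p

lemma eval_bind₁' {R σ τ : Type*} [CommSemiring R] (w : τ → R) (u : σ → MvPolynomial τ R)
    (p : MvPolynomial σ R) :
    eval w (MvPolynomial.bind₁ u p) = eval (fun i => eval w (u i)) p :=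
  eval₂Hom_bind₁ _ _ _ _

lemma exists_coords {σ K L : Type*} [Field K] [Field L] [Algebra K L] {ι : Type*} [Fintype ι]
    (b : Module.Basis ι K L) (P : MvPolynomial σ L) :
    ∃ Q : ι → MvPolynomial σ K, ∀ v : σ → K,
      eval (fun s => algebraMap K L (v s)) P = ∑ i, eval v (Q i) • b i := by
  induction P using MvPolynomial.induction_on with
  | C a =>
    exact ⟨fun i => C (b.repr a i), fun v => by simp [b.sum_repr a]⟩
  | add p q hp hq =>
    obtain ⟨Qp, hQp⟩ := hp
    obtain ⟨Qq, hQq⟩ := hq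
    refine ⟨fun i => Qp i + Qq i, fun v => ?_⟩
    simp [hQp v, hQq v, add_smul, Finset.sum_add_distrib]
  | mul_X p k hp =>
    obtain ⟨Q, hQ⟩ := hp
    refine ⟨fun i => Q i * X k, fun v => ?_⟩
    simp only [map_mul, hQ v, eval_X, Finset.sum_mul, smul_mul_assoc]
    congr 1; ext i
    rw [Algebra.smul_def, Algebra.smul_def, map_mul]; ring

lemma exists_normPoly {σ K L : Type*} [Field K] [Field L] [Algebra K L] [FiniteDimensional K L]
    (P : MvPolynomial σ L) :
    ∃ Q : MvPolynomial σ K, ∀ v : σ → K,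
      eval v Q = Algebra.norm K (eval (fun s => algebraMap K L (v s)) P) := by
  classical
  let b := Module.finBasis K L
  obtain ⟨Qc, hQc⟩ := exists_coords b P
  refine ⟨(∑ i, Qc i • (Algebra.leftMulMatrix b (b i)).map (C : K → MvPolynomial σ K)).det,
    fun v => ?_⟩
  rw [Algebra.norm_eq_matrix_det b, hQc v]
  rw [RingHom.map_det]
  congr 1
  ext r s
  simp [Matrix.sum_apply, Matrix.map_apply, Matrix.smul_apply, smul_eq_mul, map_sum]

lemma exists_denom_clear {σ R K : Type*} [CommRing R] [Nontrivial R] [Field K] [Algebra R K]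
    [IsFractionRing R K] (Q : MvPolynomial σ K) :
    ∃ s : R, s ≠ 0 ∧ ∃ Q' : MvPolynomial σ R,
      MvPolynomial.map (algebraMap R K) Q' = C (algebraMap R K s) * Q := by
  classical
  obtain ⟨s, hs⟩ := IsLocalization.exist_integer_multiples (nonZeroDivisors R) Q.support
    (fun m => coeff m Q)
  choose q hq using hs
  refine ⟨(s : R), nonZeroDivisors.coe_ne_zero s,
    ∑ m ∈ Q.support.attach, monomial m.1 (q m.1 m.2), ?_⟩
  rw [map_sum]
  conv_rhs => rw [Q.as_sum, Finset.mul_sum]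
  rw [← Finset.sum_attach Q.support (fun m => C ((algebraMap R K) ↑s) * monomial m (coeff m Q))]
  refine Finset.sum_congr rfl fun m _ => ?_
  rw [map_monomial, hq m.1 m.2, C_mul_monomial, Algebra.smul_def]

end DiophantineAux

open MvPolynomial DiophantineAux in
/-- Let `K ⊆ L` be number fields.  If `ℤ` is Diophantine over `O_L`, then `ℤ` is Diophantine
over `O_K`. -/
theorem int_isDiophantine_of_int_isDiophantine (K L : Type*) [Field K] [NumberField K]
    [Field L] [NumberField L] [Algebra K L]
    (h : IsDiophantine (Set.range (Int.cast : ℤ → 𝓞 L))) :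
    IsDiophantine (Set.range (Int.cast : ℤ → 𝓞 K)) := by
  classical
  obtain ⟨n, p, hp⟩ := h
  set f : 𝓞 K →+* 𝓞 L := algebraMap (𝓞 K) (𝓞 L) with hf
  have hfinj : Function.Injective f := by
    intro a b hab
    apply NumberField.RingOfIntegers.coe_injective (K := K)
    apply (algebraMap K L).injective
    show algebraMap (𝓞 L) L (f a) = algebraMap (𝓞 L) L (f b)
    rw [hab]
  -- a finite spanning family for 𝓞 L over 𝓞 K
  have : Module.Finite (𝓞 K) (𝓞 L) := Module.Finite.of_restrictScalars_finite ℤ (𝓞 K) (𝓞 L)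
  obtain ⟨S, hS⟩ := Module.finite_def.mp this
  set d := S.card with hd
  set ω : Fin d → 𝓞 L := fun j => (S.equivFin.symm j : 𝓞 L) with hω
  have hspan : ∀ z : 𝓞 L, ∃ c : Fin d → 𝓞 K, ∑ j, c j • ω j = z := by
    intro z
    have hr : Set.range ω = (S : Set (𝓞 L)) := by
      ext w
      constructor
      · rintro ⟨j, rfl⟩; exact (S.equivFin.symm j).2
      · intro hw; exact ⟨S.equivFin ⟨w, hw⟩, by simp [hω]⟩
    have : z ∈ Submodule.span (𝓞 K) (Set.range ω) := by
      rw [hr, hS]; trivial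
    exact (Submodule.mem_span_range_iff_exists_fun _).mp this
  set m := n * d with hm
  set e : Fin n × Fin d ≃ Fin m := finProdFinEquiv with he
  -- substituted polynomial over 𝓞 L in variables Fin (m+1)
  set u : Fin (n + 1) → MvPolynomial (Fin (m + 1)) (𝓞 L) :=
    Fin.cons (X 0) (fun i => ∑ j, C (ω j) * X (Fin.succ (e (i, j)))) with hu
  set P : MvPolynomial (Fin (m + 1)) (𝓞 L) := MvPolynomial.bind₁ u p with hP
  have key : ∀ (t : 𝓞 K) (y : Fin m → 𝓞 K),
      eval (fun k => f ((Fin.cons t y : Fin (m + 1) → 𝓞 K) k)) P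
        = eval (Fin.cons (f t) (fun i => ∑ j, y (e (i, j)) • ω j)) p := by
    intro t y
    rw [hP, eval_bind₁']
    have harg : (fun i => eval (fun k => f ((Fin.cons t y : Fin (m + 1) → 𝓞 K) k)) (u i))
        = Fin.cons (f t) (fun i => ∑ j, y (e (i, j)) • ω j) := by
      funext i
      refine Fin.cases ?_ (fun i => ?_) i
      · simp [hu]
      · simp [hu, Fin.cons_succ, Algebra.smul_def, mul_comm]; rfl
    rw [harg]
  -- pass to the field level
  set ι : 𝓞 L →+* L := algebraMap (𝓞 L) L with hι
  have hιinj : Function.Injective ι := NumberField.RingOfIntegers.coe_injective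
  set PL : MvPolynomial (Fin (m + 1)) L := MvPolynomial.map ι P with hPL
  obtain ⟨QK, hQK⟩ := exists_normPoly (K := K) PL
  obtain ⟨s, hs, Q', hQ'⟩ := exists_denom_clear (R := 𝓞 K) QK
  refine ⟨m, Q', fun t => ?_⟩
  -- the final chain of equivalences
  have stepA : t ∈ Set.range (Int.cast : ℤ → 𝓞 K) ↔ f t ∈ Set.range (Int.cast : ℤ → 𝓞 L) := by
    constructor
    · rintro ⟨k, rfl⟩; exact ⟨k, (map_intCast f k).symm⟩
    · rintro ⟨k, hk⟩; exact ⟨k, hfinj (by rw [map_intCast, hk])⟩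
  -- equivalence between witnesses over 𝓞 L and over 𝓞 K
  have stepC : (∃ x : Fin n → 𝓞 L, eval (Fin.cons (f t) x) p = 0)
      ↔ ∃ y : Fin m → 𝓞 K, eval (fun k => f ((Fin.cons t y : Fin (m + 1) → 𝓞 K) k)) P = 0 := by
    constructor
    · rintro ⟨x, hx⟩
      choose c hc using fun i => hspan (x i)
      refine ⟨fun k => c (e.symm k).1 (e.symm k).2, ?_⟩
      rw [key]
      have : (fun i => ∑ j, c (e.symm (e (i, j))).1 (e.symm (e (i, j))).2 • ω j) = x := by
        funext i
        simp only [Equiv.symm_apply_apply]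
        exact hc i
      rw [this]
      exact hx
    · rintro ⟨y, hy⟩
      exact ⟨fun i => ∑ j, y (e (i, j)) • ω j, by rw [← key t y]; exact hy⟩
  -- equivalence between P over 𝓞 L vanishing and Q' over 𝓞 K vanishing
  have stepD : ∀ y : Fin m → 𝓞 K,
      eval (Fin.cons t y) Q' = 0 ↔ eval (fun k => f ((Fin.cons t y : Fin (m + 1) → 𝓞 K) k)) P = 0 := by
    intro y
    set v : Fin (m + 1) → 𝓞 K := Fin.cons t y with hv
    have h1 : algebraMap (𝓞 K) K (eval v Q')
        = algebraMap (𝓞 K) K s * eval (fun k => algebraMap (𝓞 K) K (v k)) QK := by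
      rw [hom_eval' (algebraMap (𝓞 K) K) v Q', hQ']
      simp
    have h2 : eval (fun k => algebraMap K L (algebraMap (𝓞 K) K (v k))) PL
        = ι (eval (fun k => f (v k)) P) := by
      rw [hPL]
      exact (hom_eval' ι (fun k => f (v k)) P).symm
    constructor
    · intro hz
      have := h1
      rw [hz, map_zero] at this
      have hns : algebraMap (𝓞 K) K s ≠ 0 := by
        simpa using (map_ne_zero_iff _ (NumberField.RingOfIntegers.coe_injective)).mpr hs
      have : eval (fun k => algebraMap (𝓞 K) K (v k)) QK = 0 := by
        rcases mul_eq_zero.mp this.symm with h' | h'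
        · exact absurd h' hns
        · exact h'
      rw [hQK, h2] at this
      have := (Algebra.norm_eq_zero_iff (R := K)).mp this
      exact hιinj (by rw [this, map_zero])
    · intro hz
      have : eval (fun k => algebraMap (𝓞 K) K (v k)) QK = 0 := by
        rw [hQK, h2, hz, map_zero, Algebra.norm_eq_zero_iff]
      apply NumberField.RingOfIntegers.coe_injective
      show algebraMap (𝓞 K) K (eval v Q') = algebraMap (𝓞 K) K 0
      rw [h1, this, mul_zero, map_zero]
  rw [stepA, hp (f t), stepC]
  exact exists_congr fun y => (stepD y).symm
end

section
/- Let L be a number field that is Galois over ℚ, let K be a subfield of L with [L : K] = 2, and let σ₁ : L → ℂ be an embedding such that σ₁(K) ⊆ ℝ but σ₁(L) ⊄ ℝ. Then for every τ ∈ Gal(L/ℚ), one has σ₁(τ(K)) ⊆ ℝ if and only if τ lies in the centralizer of Gal(L/K) inside Gal(L/ℚ); that is, {τ ∈ Gal(L/ℚ) : σ₁(τ(K)) ⊆ ℝ} = C_{Gal(L/ℚ)}(Gal(L/K)). -/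
open NumberField


/-- Let `L` be a number field Galois over `ℚ`, let `K` be a subfield of `L` with `[L : K] = 2`,
and let `σ₁ : L → ℂ` be an embedding with `σ₁(K) ⊆ ℝ` but `σ₁(L) ⊄ ℝ`.  Then for every
`τ ∈ Gal(L/ℚ)`, one has `σ₁(τ(K)) ⊆ ℝ` if and only if `τ` centralizes `Gal(L/K)`. -/
theorem real_image_iff_mem_centralizer (L : Type*) [Field L] [NumberField L] [IsGalois ℚ L]
    (K : IntermediateField ℚ L) (hdeg : Module.finrank K L = 2)
    (σ₁ : L →+* ℂ) (hK : ∀ x ∈ K, (σ₁ x).im = 0) (hL : ¬∀ x : L, (σ₁ x).im = 0) :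
    ∀ τ : L ≃ₐ[ℚ] L, (∀ x ∈ K, (σ₁ (τ x)).im = 0) ↔
      τ ∈ Subgroup.centralizer (K.fixingSubgroup : Set (L ≃ₐ[ℚ] L)) := by
  classical
  -- construct the "conjugation" automorphism c
  obtain ⟨c, hc⟩ : ∃ c : L ≃ₐ[ℚ] L, ComplexEmbedding.IsConj σ₁ c := by
    letI := σ₁.toAlgebra
    haveI : IsScalarTower ℚ L ℂ := IsScalarTower.of_algebraMap_eq' (Subsingleton.elim _ _)
    let φ' : L →ₐ[ℚ] ℂ := { (star σ₁ : L →+* ℂ) with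
      commutes' := fun r => by
        have : σ₁ (algebraMap ℚ L r) = algebraMap ℚ ℂ r :=
          RingHom.congr_fun (Subsingleton.elim (σ₁.comp (algebraMap ℚ L)) (algebraMap ℚ ℂ)) r
        simp [RingHom.star_def, this] }
    exact ⟨AlgHom.restrictNormal' φ' L,
      (RingHom.ext <| AlgHom.restrictNormal_commutes φ' L).symm⟩
  have hceq : ∀ x : L, σ₁ (c x) = star (σ₁ x) := hc.eq
  -- c fixes K
  have hcK : c ∈ K.fixingSubgroup := by
    rw [IntermediateField.mem_fixingSubgroup_iff]
    intro x hx
    apply σ₁.injective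
    rw [hceq x, Complex.star_def, Complex.conj_eq_iff_im]
    exact hK x hx
  -- c ≠ 1
  have hc1 : c ≠ 1 := by
    intro h
    apply hL
    intro x
    have := hceq x
    rw [h] at this
    simp only [AlgEquiv.one_apply] at this
    exact Complex.conj_eq_iff_im.mp this.symm
  -- the fixing subgroup is {1, c}
  have hcard : Nat.card K.fixingSubgroup = 2 := by
    rw [IsGalois.card_fixingSubgroup_eq_finrank]
    exact hdeg
  have hmem : ∀ g ∈ K.fixingSubgroup, g = 1 ∨ g = c := by
    intro g hg
    by_contra hcon
    push_neg at hcon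
    obtain ⟨a, b, hab, huniv⟩ := Nat.card_eq_two_iff.mp hcard
    have h1 : (⟨1, one_mem _⟩ : K.fixingSubgroup) ∈ ({a, b} : Set _) := huniv ▸ Set.mem_univ _
    have h2 : (⟨g, hg⟩ : K.fixingSubgroup) ∈ ({a, b} : Set _) := huniv ▸ Set.mem_univ _
    have h3 : (⟨c, hcK⟩ : K.fixingSubgroup) ∈ ({a, b} : Set _) := huniv ▸ Set.mem_univ _
    have hne1 : (⟨g, hg⟩ : K.fixingSubgroup) ≠ ⟨1, one_mem _⟩ := by
      simp [Subtype.ext_iff, hcon.1]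
    have hne2 : (⟨g, hg⟩ : K.fixingSubgroup) ≠ ⟨c, hcK⟩ := by
      simp [Subtype.ext_iff, hcon.2]
    have hne3 : (⟨1, one_mem _⟩ : K.fixingSubgroup) ≠ ⟨c, hcK⟩ := by
      simp [Subtype.ext_iff]
      exact fun h => hc1 h.symm
    simp only [Set.mem_insert_iff, Set.mem_singleton_iff] at h1 h2 h3
    rcases h1 with h1 | h1 <;> rcases h2 with h2 | h2 <;> rcases h3 with h3 | h3 <;>
      first
        | exact hne1 (h2.trans h1.symm)
        | exact hne2 (h2.trans h3.symm)
        | exact hne3 (h1.trans h3.symm)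
  intro τ
  constructor
  · intro h
    -- τ⁻¹ * c * τ fixes K
    have hfix : τ⁻¹ * c * τ ∈ K.fixingSubgroup := by
      rw [IntermediateField.mem_fixingSubgroup_iff]
      intro x hx
      have hcx : c (τ x) = τ x := by
        apply σ₁.injective
        rw [hceq, Complex.star_def, Complex.conj_eq_iff_im]
        exact h x hx
      show τ⁻¹ (c (τ x)) = x
      rw [hcx]
      exact τ.symm_apply_apply x
    have : τ⁻¹ * c * τ = c := by
      rcases hmem _ hfix with h' | h'
      · exfalso
        apply hc1
        have := congrArg (fun g => τ * g * τ⁻¹) h'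
        simpa [mul_assoc] using this
      · exact h'
    have hcomm : c * τ = τ * c := by
      have := congrArg (fun g => τ * g) this
      simpa [mul_assoc] using this
    rw [Subgroup.mem_centralizer_iff]
    intro g hg
    rcases hmem g hg with h' | h'
    · simp [h']
    · rw [h']; exact hcomm
  · intro h x hx
    have hcomm : c * τ = τ * c := Subgroup.mem_centralizer_iff.mp h c hcK
    have : σ₁ (c (τ x)) = σ₁ (τ x) := by
      have h1 : c (τ x) = τ (c x) := congrFun (congrArg (fun g => g.toFun) hcomm) x
      have h2 : c x = x := (IntermediateField.mem_fixingSubgroup_iff K c).mp hcK x hx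
      rw [h1, h2]
    rw [hceq, Complex.star_def] at this
    exact Complex.conj_eq_iff_im.mp this
end

section
/- Let L be a number field that is Galois over ℚ, let K be a subfield of L with [L : K] = 2, and suppose there exists an embedding σ₁ : L → ℂ with σ₁(K) ⊆ ℝ but σ₁(L) ⊄ ℝ. Then the number of real embeddings of K (ring homomorphisms K → ℂ with image contained in ℝ) equals |C_{Gal(L/ℚ)}(Gal(L/K))| / 2, where C_{Gal(L/ℚ)}(Gal(L/K)) is the centralizer of Gal(L/K) in Gal(L/ℚ). -/
open IntermediateField

section
attribute [local instance high] IntermediateField.algebra'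

private lemma exists_factor {L : Type*} [Field L] [Algebra ℚ L] [Normal ℚ L]
    (σ f : L →ₐ[ℚ] ℂ) : ∃ g : L ≃ₐ[ℚ] L, ∀ x, f x = σ (g x) := by
  let E : IntermediateField ℚ ℂ := σ.fieldRange
  let e : L ≃ₐ[ℚ] E := AlgEquiv.ofInjectiveField σ
  have he : ∀ x : L, (e x : ℂ) = σ x := fun x => rfl
  have hE : Normal ℚ E := Normal.of_algEquiv e
  have hrange : f.fieldRange = E := by
    have h1 : (f.comp e.symm.toAlgHom).fieldRange = E := AlgHom.fieldRange_of_normal _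
    rw [← h1]
    ext y
    simp only [AlgHom.mem_fieldRange, AlgHom.comp_apply]
    constructor
    · rintro ⟨x, rfl⟩
      exact ⟨e x, by rw [AlgEquiv.toAlgHom_eq_coe, AlgEquiv.coe_toAlgHom, e.symm_apply_apply]⟩
    · rintro ⟨x, rfl⟩; exact ⟨e.symm x, rfl⟩
  let ef : L ≃ₐ[ℚ] (f.fieldRange : IntermediateField ℚ ℂ) := AlgEquiv.ofInjectiveField f
  have hef : ∀ x : L, (ef x : ℂ) = f x := fun x => rfl
  refine ⟨(ef.trans (IntermediateField.equivOfEq hrange)).trans e.symm, fun x => ?_⟩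
  have key : ∀ y : E, σ (e.symm y) = (y : ℂ) := fun y => by
    conv_rhs => rw [← e.apply_symm_apply y]; rw [he]
  simp only [AlgEquiv.trans_apply, key]
  rw [← hef x]
  rfl

end

/-- Let `L` be a number field Galois over `ℚ`, let `K` be a subfield of `L` with `[L : K] = 2`,
and suppose there is an embedding `σ₁ : L → ℂ` with `σ₁(K) ⊆ ℝ` but `σ₁(L) ⊄ ℝ`.  Then the
number of real embeddings of `K` equals half the order of the centralizer of `Gal(L/K)` in
`Gal(L/ℚ)`. -/
theorem card_real_embeddings_eq_card_centralizer_div_two (L : Type*) [Field L] [NumberField L]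
    [IsGalois ℚ L] (K : IntermediateField ℚ L) (hdeg : Module.finrank K L = 2)
    (σ₁ : L →+* ℂ) (hK : ∀ x ∈ K, (σ₁ x).im = 0) (hL : ¬∀ x : L, (σ₁ x).im = 0) :
    Nat.card {σ : K →+* ℂ // ∀ x, (σ x).im = 0} =
      Nat.card (Subgroup.centralizer (K.fixingSubgroup : Set (L ≃ₐ[ℚ] L))) / 2 := by
  classical
  set H := K.fixingSubgroup with hH
  set C := Subgroup.centralizer (H : Set (L ≃ₐ[ℚ] L)) with hC
  set σa : L →ₐ[ℚ] ℂ := σ₁.toRatAlgHom with hσa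
  have hσa' : ∀ x : L, σa x = σ₁ x := fun x => rfl
  have hcardH : Nat.card H = 2 := by
    rw [IsGalois.card_fixingSubgroup_eq_finrank]
    exact hdeg
  -- complex conjugation as an element of the Galois group
  obtain ⟨τ, hτ⟩ := exists_factor σa (((starRingEnd ℂ).comp σ₁).toRatAlgHom)
  have hτ' : ∀ x : L, (starRingEnd ℂ) (σ₁ x) = σ₁ (τ x) := fun x => hτ x
  have hτH : τ ∈ H := by
    rw [hH, IntermediateField.mem_fixingSubgroup_iff]
    intro x hx
    apply σ₁.injective
    rw [← hτ' x, Complex.conj_eq_iff_im]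
    exact hK x hx
  have hτne : τ ≠ 1 := by
    intro h
    apply hL
    intro x
    have h2 := hτ' x
    rw [h] at h2
    simp only [AlgEquiv.one_apply] at h2
    rw [← Complex.conj_eq_iff_im]
    exact h2
  -- H = {1, τ}
  have hHdesc : ∀ g : L ≃ₐ[ℚ] L, g ∈ H ↔ g = 1 ∨ g = τ := by
    intro g
    constructor
    · intro hg
      by_contra hcon
      push_neg at hcon
      obtain ⟨a, b, hab, huniv⟩ := Nat.card_eq_two_iff.mp hcardH
      have mem : ∀ x : H, x = a ∨ x = b := fun x => by
        have hx : x ∈ ({a, b} : Set H) := huniv ▸ Set.mem_univ x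
        simpa [Set.mem_insert_iff] using hx
      rcases mem ⟨1, H.one_mem⟩ with h1 | h1 <;> rcases mem ⟨τ, hτH⟩ with h2 | h2 <;>
        rcases mem ⟨g, hg⟩ with h3 | h3 <;>
        first
          | exact hτne (congrArg Subtype.val (h2.trans h1.symm))
          | exact hcon.1 (congrArg Subtype.val (h3.trans h1.symm))
          | exact hcon.2 (congrArg Subtype.val (h3.trans h2.symm))
    · rintro (rfl | rfl)
      · exact H.one_mem
      · exact hτH
  have hHC : H ≤ C := by
    intro h hh
    rw [hC, Subgroup.mem_centralizer_iff]
    intro h' hh'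
    rcases (hHdesc h).mp hh with rfl | rfl <;> rcases (hHdesc h').mp hh' with rfl | rfl <;>
      simp
  -- the map from the centralizer to embeddings of K
  have hτfix : ∀ x : K, τ (x : L) = (x : L) := fun x =>
    (IntermediateField.mem_fixingSubgroup_iff K τ).mp hτH x x.2
  let emb : (L ≃ₐ[ℚ] L) → (K →+* ℂ) := fun g =>
    (σ₁.comp g.toAlgHom.toRingHom).comp (algebraMap K L)
  have emb_apply : ∀ g (x : K), emb g x = σ₁ (g (x : L)) := fun g x => rfl
  have real : ∀ g : L ≃ₐ[ℚ] L, g ∈ C → ∀ x : K, ((emb g) x).im = 0 := by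
    intro g hg x
    rw [emb_apply, ← Complex.conj_eq_iff_im, hτ' (g (x : L))]
    have hcomm : τ * g = g * τ := Subgroup.mem_centralizer_iff.mp hg τ hτH
    have : τ (g (x : L)) = g (τ (x : L)) := by
      rw [← AlgEquiv.mul_apply, hcomm, AlgEquiv.mul_apply]
    rw [this, hτfix]
  let Sub := {σ : K →+* ℂ // ∀ x, (σ x).im = 0}
  let F : C → Sub := fun g => ⟨emb g, real g g.2⟩
  -- F g = F g' iff same coset of H
  have Fiff : ∀ g g' : C, F g = F g' ↔ ((g : L ≃ₐ[ℚ] L))⁻¹ * g' ∈ H := by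
    intro g g'
    rw [Subtype.ext_iff]
    constructor
    · intro h
      rw [hH, IntermediateField.mem_fixingSubgroup_iff]
      intro x hx
      have hx' : σ₁ ((g : L ≃ₐ[ℚ] L) ((⟨x, hx⟩ : K) : L))
          = σ₁ ((g' : L ≃ₐ[ℚ] L) ((⟨x, hx⟩ : K) : L)) := by
        rw [← emb_apply, ← emb_apply]
        exact DFunLike.congr_fun h ⟨x, hx⟩
      have hgx : (g : L ≃ₐ[ℚ] L) x = (g' : L ≃ₐ[ℚ] L) x := σ₁.injective hx'
      rw [AlgEquiv.mul_apply]
      apply (g : L ≃ₐ[ℚ] L).injective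
      have hinv : ((g : L ≃ₐ[ℚ] L)⁻¹ : L ≃ₐ[ℚ] L) = (g : L ≃ₐ[ℚ] L).symm := rfl
      rw [hinv, AlgEquiv.apply_symm_apply, hgx]
    · intro h
      ext x
      rw [emb_apply, emb_apply]
      congr 1
      have h5 := (IntermediateField.mem_fixingSubgroup_iff K _).mp h (x : L) x.2
      have hinv : ((g : L ≃ₐ[ℚ] L)⁻¹ : L ≃ₐ[ℚ] L) = (g : L ≃ₐ[ℚ] L).symm := rfl
      rw [AlgEquiv.mul_apply, hinv] at h5
      have h6 := congrArg (g : L ≃ₐ[ℚ] L) h5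
      rw [AlgEquiv.apply_symm_apply] at h6
      exact h6.symm
  -- quotient map
  let H' : Subgroup C := H.subgroupOf C
  have memH' : ∀ x : C, x ∈ H' ↔ (x : L ≃ₐ[ℚ] L) ∈ H := fun x => Subgroup.mem_subgroupOf
  let Fbar : (C ⧸ H') → Sub := Quotient.lift F (by
    intro a b h
    exact (Fiff a b).mpr ((memH' _).mp (QuotientGroup.leftRel_apply.mp h)))
  have hFbar_inj : Function.Injective Fbar := by
    intro x y
    induction x using Quotient.inductionOn with | h a =>
    induction y using Quotient.inductionOn with | h b =>
    intro h
    exact Quotient.sound (QuotientGroup.leftRel_apply.mpr ((memH' _).mpr ((Fiff a b).mp h)))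
  have hFbar_surj : Function.Surjective Fbar := by
    rintro ⟨σ, hσ⟩
    letI : Algebra K ℂ := σ.toAlgebra
    haveI : Module.IsTorsionFree K ℂ :=
      Module.isTorsionFree_iff_algebraMap_injective.mpr σ.injective
    have halg : Algebra.IsAlgebraic K L := Algebra.IsAlgebraic.of_finite K L
    let f0 : L →ₐ[K] ℂ := IsAlgClosed.lift
    have hf0 : ∀ x : K, f0 (x : L) = σ x := fun x => f0.commutes x
    obtain ⟨g, hg⟩ := exists_factor σa f0.toRingHom.toRatAlgHom
    have hg' : ∀ x : L, f0 x = σ₁ (g x) := fun x => hg x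
    -- g commutes with τ
    have hu : (g⁻¹ * (τ * g)) ∈ H := by
      rw [hH, IntermediateField.mem_fixingSubgroup_iff]
      intro x hx
      have hfix : τ (g x) = g x := by
        apply σ₁.injective
        rw [← hτ' (g x), ← hg' x]
        have : f0 x = σ ⟨x, hx⟩ := by rw [← hf0 ⟨x, hx⟩]
        rw [this, Complex.conj_eq_iff_im]
        exact hσ _
      have hinv : (g⁻¹ : L ≃ₐ[ℚ] L) = g.symm := rfl
      rw [AlgEquiv.mul_apply, AlgEquiv.mul_apply, hfix, hinv, AlgEquiv.symm_apply_apply]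
    have hune : g⁻¹ * (τ * g) ≠ 1 := by
      intro h
      apply hτne
      have := congrArg (fun z => g * z * g⁻¹) h
      simpa [mul_assoc] using this
    have hcomm : τ * g = g * τ := by
      rcases (hHdesc _).mp hu with h | h
      · exact absurd h hune
      · have := congrArg (fun z => g * z) h
        simpa [← mul_assoc] using this
    have hgC : g ∈ C := by
      rw [hC, Subgroup.mem_centralizer_iff]
      intro h hh
      rcases (hHdesc h).mp hh with rfl | rfl
      · simp
      · exact hcomm
    refine ⟨QuotientGroup.mk (⟨g, hgC⟩ : C), ?_⟩
    show F ⟨g, hgC⟩ = _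
    apply Subtype.ext
    ext x
    rw [emb_apply]
    exact ((hg' (x : L)).symm).trans (hf0 x)
  -- count
  have h1 : Nat.card Sub = Nat.card (C ⧸ H') :=
    (Nat.card_eq_of_bijective Fbar ⟨hFbar_inj, hFbar_surj⟩).symm
  have h2 : Nat.card C = Nat.card (C ⧸ H') * Nat.card H' :=
    Subgroup.card_eq_card_quotient_mul_card_subgroup H'
  have h3 : Nat.card H' = 2 := by
    rw [Nat.card_congr (Subgroup.subgroupOfEquivOfLe hHC).toEquiv]
    exact hcardH
  rw [h3] at h2
  show Nat.card Sub = Nat.card C / 2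
  omega
end

section
/- Let K be a number field, and let a₂, a₄, a₆ ∈ K be such that y² = x³ + a₂x² + a₄x + a₆ has nonzero discriminant, defining an elliptic curve E over K. Let d ∈ K^× be a non-square and let L = K(√d) be the quadratic extension of K obtained by adjoining a square root of d. Then rk E(L) = rk E(K) + rk E^d(K), where E^d is the quadratic twist y² = x³ + d·a₂·x² + d²·a₄·x + d³·a₆. -/
universe u

set_option linter.unusedSectionVars false
set_option maxHeartbeats 1000000


section RankLemmas

lemma rank_le_of_torsion_ker {A B : Type u} [AddCommGroup A] [AddCommGroup B] (f : A →+ B)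
    (hf : ∀ a, f a = 0 → ∃ n : ℤ, n ≠ 0 ∧ n • a = 0) :
    Module.rank ℤ A ≤ Module.rank ℤ B := by
  rw [Module.rank_def]
  apply ciSup_le'
  rintro ⟨s, hs⟩
  refine LinearIndependent.cardinal_le_rank (v := fun i : s ↦ f i) ?_
  rw [LinearIndepOn] at hs; rw [linearIndependent_iff'] at hs ⊢
  intro t g hg i hit
  have h0 : f (∑ j ∈ t, g j • (j : A)) = 0 := by
    rw [map_sum]; simpa only [map_zsmul] using hg
  obtain ⟨n, hn, hn0⟩ := hf _ h0
  have h1 : ∑ j ∈ t, (n * g j) • (j : A) = 0 := by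
    simp_rw [mul_smul]
    rw [← Finset.smul_sum, hn0]
  exact (mul_eq_zero.mp (hs t (fun j ↦ n * g j) h1 i hit)).resolve_left hn

lemma rank_le_of_two_smul_surj {A B : Type u} [AddCommGroup A] [AddCommGroup B] (f : A →+ B)
    (hf : ∀ b, ∃ a, f a = (2 : ℤ) • b) : Module.rank ℤ B ≤ Module.rank ℤ A := by
  rw [Module.rank_def (R := ℤ) (M := B)]
  apply ciSup_le'
  rintro ⟨s, hs⟩
  choose a ha using fun i : s ↦ hf i
  refine LinearIndependent.cardinal_le_rank (v := a) ?_
  rw [LinearIndepOn] at hs; rw [linearIndependent_iff'] at hs ⊢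
  intro t g hg i hit
  have h0 : ∑ j ∈ t, ((2 : ℤ) * g j) • (j : B) = 0 := by
    calc ∑ j ∈ t, ((2 : ℤ) * g j) • (j : B) = ∑ j ∈ t, g j • ((2 : ℤ) • (j : B)) := by
          simp_rw [smul_smul, mul_comm]
      _ = f (∑ j ∈ t, g j • a j) := by rw [map_sum]; simp_rw [map_zsmul, ha]
      _ = 0 := by rw [hg, map_zero]
  have h2 := hs t _ h0 i hit
  exact (mul_eq_zero.mp h2).resolve_left two_ne_zero

lemma rank_prod_int {A B : Type u} [AddCommGroup A] [AddCommGroup B] :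
    Module.rank ℤ (A × B) = Module.rank ℤ A + Module.rank ℤ B := by
  rw [← Submodule.rank_quotient_add_rank (LinearMap.ker (LinearMap.fst ℤ A B)),
    ((LinearMap.fst ℤ A B).quotKerEquivOfSurjective LinearMap.fst_surjective).rank_eq,
    LinearMap.ker_fst,
    ← (LinearEquiv.ofInjective _ (LinearMap.inr_injective (M := A) (M₂ := B))).rank_eq]

end RankLemmas

open Polynomial

section FieldTheory

variable {K L : Type u} [Field K] [Field L] [Algebra K L] [CharZero L]
  (d : K) (hd0 : d ≠ 0) (hdns : ¬∃ c : K, c ^ 2 = d)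
  (s : L) (hs : s ^ 2 = algebraMap K L d) (hgen : Algebra.adjoin K {s} = ⊤)

include hd0 hs in
lemma s_ne_zero : s ≠ 0 := by
  intro h
  apply hd0
  have : algebraMap K L d = 0 := by rw [← hs, h]; ring
  exact (_root_.map_eq_zero (algebraMap K L)).mp this

include hdns hs in
lemma s_int : IsIntegral K s :=
  ⟨X ^ 2 - C d, monic_X_pow_sub_C d two_ne_zero, by simp [hs]⟩

include hdns hs in
lemma s_minpoly : minpoly K s = X ^ 2 - C d := by
  have h0 : aeval s (X ^ 2 - C d) = 0 := by simp [hs]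
  exact (minpoly.eq_of_irreducible_of_monic
    (X_pow_sub_C_irreducible_of_prime Nat.prime_two fun b hb => hdns ⟨b, hb⟩) h0
    (monic_X_pow_sub_C d two_ne_zero)).symm

include hs hgen in
lemma s_decomp : ∀ x : L, ∃ a b : K, x = algebraMap K L a + algebraMap K L b * s := by
  intro x
  have hx : x ∈ Algebra.adjoin K ({s} : Set L) := hgen ▸ trivial
  induction hx using Algebra.adjoin_induction with
  | mem y hy =>
    rw [Set.mem_singleton_iff] at hy
    exact ⟨0, 1, by simp [hy]⟩
  | algebraMap a => exact ⟨a, 0, by simp⟩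
  | add y z hy hz hy' hz' =>
    obtain ⟨a, b, rfl⟩ := hy'
    obtain ⟨c, e, rfl⟩ := hz'
    exact ⟨a + c, b + e, by push_cast [map_add]; ring⟩
  | mul y z hy hz hy' hz' =>
    obtain ⟨a, b, rfl⟩ := hy'
    obtain ⟨c, e, rfl⟩ := hz'
    refine ⟨a * c + b * e * d, a * e + b * c, ?_⟩
    simp only [map_add, map_mul]
    rw [← hs]
    ring

include hdns hs hgen in
/-- A power basis of `L` over `K` with generator `s`. -/
noncomputable def sPB : PowerBasis K L :=
  (Algebra.adjoin.powerBasis (s_int d hdns s hs)).map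
    ((Subalgebra.equivOfEq _ _ hgen).trans Subalgebra.topEquiv)

lemma sPB_gen : (sPB d hdns s hs hgen).gen = s := by
  simp [sPB]

lemma aeval_neg_s : aeval (-s) (minpoly K (sPB d hdns s hs hgen).gen) = 0 := by
  rw [sPB_gen, s_minpoly d hdns s hs]
  simp [hs]

/-- The nontrivial automorphism of `L = K(√d)`. -/
noncomputable def conjAut : L →ₐ[K] L :=
  PowerBasis.lift (sPB d hdns s hs hgen) (-s) (aeval_neg_s d hdns s hs hgen)

lemma conjAut_s : conjAut d hdns s hs hgen s = -s := by
  have h := PowerBasis.lift_gen (sPB d hdns s hs hgen) (-s) (aeval_neg_s d hdns s hs hgen)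
  rw [sPB_gen] at h
  exact h

lemma conjAut_conjAut (x : L) :
    conjAut d hdns s hs hgen (conjAut d hdns s hs hgen x) = x := by
  have h : (conjAut d hdns s hs hgen).comp (conjAut d hdns s hs hgen) = AlgHom.id K L := by
    apply PowerBasis.algHom_ext (sPB d hdns s hs hgen)
    rw [sPB_gen]
    simp [conjAut_s, AlgHom.comp_apply]
  exact DFunLike.congr_fun h x

include hd0 in
lemma conjAut_fixed {x : L} (hx : conjAut d hdns s hs hgen x = x) :
    ∃ a : K, algebraMap K L a = x := by
  obtain ⟨a, b, rfl⟩ := s_decomp d s hs hgen x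
  refine ⟨a, ?_⟩
  have h2 : algebraMap K L b * s = 0 := by
    have := hx
    rw [map_add, map_mul, AlgHom.commutes, AlgHom.commutes, conjAut_s] at this
    have h2s : (2 : L) * (algebraMap K L b * s) = 0 := by linear_combination -this
    exact (mul_eq_zero.mp h2s).resolve_left two_ne_zero
  rw [mul_eq_zero] at h2
  rcases h2 with h | h
  · rw [h]; simp
  · exact absurd h (s_ne_zero d hd0 s hs)

include hd0 in
lemma conjAut_antifixed {x : L} (hx : conjAut d hdns s hs hgen x = -x) :
    ∃ b : K, algebraMap K L b * s = x := by
  obtain ⟨a, b, rfl⟩ := s_decomp d s hs hgen x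
  refine ⟨b, ?_⟩
  have h2 : algebraMap K L a = 0 := by
    have := hx
    rw [map_add, map_mul, AlgHom.commutes, AlgHom.commutes, conjAut_s] at this
    have h2a : (2 : L) * algebraMap K L a = 0 := by linear_combination this
    exact (mul_eq_zero.mp h2a).resolve_left two_ne_zero
  rw [h2, zero_add]

end FieldTheory

section CurveMap

open WeierstrassCurve WeierstrassCurve.Affine
open Classical

variable {F F' : Type u} [Field F] [Field F'] (f : F →+* F')
  {W : WeierstrassCurve.Affine F} {W' : WeierstrassCurve.Affine F'} {v : F'} (hv : v ≠ 0)
  (h1 : W'.a₁ = f W.a₁ * v) (h2 : W'.a₂ = f W.a₂ * v ^ 2) (h3 : W'.a₃ = f W.a₃ * v ^ 3)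
  (h4 : W'.a₄ = f W.a₄ * v ^ 4) (h6 : W'.a₆ = f W.a₆ * v ^ 6)

include hv

lemma cm_mul_inj (n : ℕ) {a b : F} : f a * v ^ n = f b * v ^ n ↔ a = b := by
  rw [(mul_left_injective₀ (pow_ne_zero n hv)).eq_iff, f.injective.eq_iff]

include h1 h2 h3 h4 h6

lemma cm_equation (x y : F) :
    W'.Equation (f x * v ^ 2) (f y * v ^ 3) ↔ W.Equation x y := by
  have key : (f y * v ^ 3) ^ 2 + W'.a₁ * (f x * v ^ 2) * (f y * v ^ 3) + W'.a₃ * (f y * v ^ 3)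
      - ((f x * v ^ 2) ^ 3 + W'.a₂ * (f x * v ^ 2) ^ 2 + W'.a₄ * (f x * v ^ 2) + W'.a₆)
      = f (y ^ 2 + W.a₁ * x * y + W.a₃ * y
          - (x ^ 3 + W.a₂ * x ^ 2 + W.a₄ * x + W.a₆)) * v ^ 6 := by
    simp only [map_add, map_sub, map_mul, map_pow, h1, h2, h3, h4, h6]
    ring
  rw [equation_iff', equation_iff', key, mul_eq_zero, _root_.map_eq_zero]
  exact or_iff_left (pow_ne_zero 6 hv)

lemma cm_negY (x y : F) :
    W'.negY (f x * v ^ 2) (f y * v ^ 3) = f (W.negY x y) * v ^ 3 := by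
  simp only [negY, map_sub, map_neg, map_mul, h1, h3]
  ring

lemma cm_nonsingular (x y : F) :
    W'.Nonsingular (f x * v ^ 2) (f y * v ^ 3) ↔ W.Nonsingular x y := by
  have hmul : ∀ (n : ℕ) (z : F), f z * v ^ n ≠ 0 ↔ z ≠ 0 := fun n z => by
    rw [ne_eq, mul_eq_zero, _root_.map_eq_zero]
    simp [pow_eq_zero_iff, hv]
  have keyX : W'.a₁ * (f y * v ^ 3) - (3 * (f x * v ^ 2) ^ 2 + 2 * W'.a₂ * (f x * v ^ 2) + W'.a₄)
      = f (W.a₁ * y - (3 * x ^ 2 + 2 * W.a₂ * x + W.a₄)) * v ^ 4 := by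
    simp only [map_add, map_sub, map_mul, map_pow, map_ofNat, h1, h2, h4]
    ring
  have keyY : 2 * (f y * v ^ 3) + W'.a₁ * (f x * v ^ 2) + W'.a₃
      = f (2 * y + W.a₁ * x + W.a₃) * v ^ 3 := by
    simp only [map_add, map_mul, map_ofNat, h1, h3]
    ring
  rw [nonsingular_iff', nonsingular_iff', cm_equation f hv h1 h2 h3 h4 h6, keyX, keyY,
    hmul, hmul]

lemma cm_slope (x₁ x₂ y₁ y₂ : F) :
    W'.slope (f x₁ * v ^ 2) (f x₂ * v ^ 2) (f y₁ * v ^ 3) (f y₂ * v ^ 3)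
      = f (W.slope x₁ x₂ y₁ y₂) * v := by
  by_cases hx : x₁ = x₂
  · by_cases hy : y₁ = W.negY x₂ y₂
    · rw [slope_of_Y_eq (by rw [hx]) (by rw [cm_negY f hv h1 h2 h3 h4 h6, hy]),
        slope_of_Y_eq hx hy, map_zero, zero_mul]
    · have hy' : f y₁ * v ^ 3 ≠ W'.negY (f x₂ * v ^ 2) (f y₂ * v ^ 3) := by
        rw [cm_negY f hv h1 h2 h3 h4 h6]
        exact fun hc => hy ((cm_mul_inj f hv 3).mp hc)
      rw [slope_of_Y_ne (by rw [hx]) hy', slope_of_Y_ne hx hy,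
        cm_negY f hv h1 h2 h3 h4 h6]
      have keyN : 3 * (f x₁ * v ^ 2) ^ 2 + 2 * W'.a₂ * (f x₁ * v ^ 2) + W'.a₄
          - W'.a₁ * (f y₁ * v ^ 3)
          = f (3 * x₁ ^ 2 + 2 * W.a₂ * x₁ + W.a₄ - W.a₁ * y₁) * v ^ 4 := by
        simp only [map_add, map_sub, map_mul, map_pow, map_ofNat, h1, h2, h4]
        ring
      have keyD : f y₁ * v ^ 3 - f (W.negY x₁ y₁) * v ^ 3
          = f (y₁ - W.negY x₁ y₁) * v ^ 3 := by
        rw [map_sub, sub_mul]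
      rw [keyN, keyD]
      rw [mul_div_mul_comm, map_div₀,
        show (v : F') ^ 4 / v ^ 3 = v by
          rw [pow_succ, mul_comm (v ^ 3) v, mul_div_assoc, div_self (pow_ne_zero 3 hv), mul_one]]
  · rw [slope_of_X_ne hx, slope_of_X_ne (fun hc => hx ((cm_mul_inj f hv 2).mp hc)),
      show f y₁ * v ^ 3 - f y₂ * v ^ 3 = f (y₁ - y₂) * v ^ 3 by rw [map_sub, sub_mul],
      show f x₁ * v ^ 2 - f x₂ * v ^ 2 = f (x₁ - x₂) * v ^ 2 by rw [map_sub, sub_mul],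
      mul_div_mul_comm, map_div₀,
      show (v : F') ^ 3 / v ^ 2 = v by
        rw [pow_succ, mul_comm (v ^ 2) v, mul_div_assoc, div_self (pow_ne_zero 2 hv), mul_one]]

lemma cm_addX (x₁ x₂ l : F) :
    W'.addX (f x₁ * v ^ 2) (f x₂ * v ^ 2) (f l * v) = f (W.addX x₁ x₂ l) * v ^ 2 := by
  simp only [addX, map_add, map_sub, map_mul, map_pow, h1, h2]
  ring

lemma cm_negAddY (x₁ x₂ y₁ l : F) :
    W'.negAddY (f x₁ * v ^ 2) (f x₂ * v ^ 2) (f y₁ * v ^ 3) (f l * v)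
      = f (W.negAddY x₁ x₂ y₁ l) * v ^ 3 := by
  simp only [negAddY, map_add, map_mul]
  rw [cm_addX f hv h1 h2 h3 h4 h6]
  simp only [addX, negAddY, map_add, map_sub, map_mul, map_pow, h1, h2]
  ring

lemma cm_addY (x₁ x₂ y₁ l : F) :
    W'.addY (f x₁ * v ^ 2) (f x₂ * v ^ 2) (f y₁ * v ^ 3) (f l * v)
      = f (W.addY x₁ x₂ y₁ l) * v ^ 3 := by
  rw [addY, cm_addX f hv h1 h2 h3 h4 h6, cm_negAddY f hv h1 h2 h3 h4 h6,
    cm_negY f hv h1 h2 h3 h4 h6, addY]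

/-- The map on points induced by an admissible change of coordinates. -/
noncomputable def cmFun : W.Point → W'.Point
  | 0 => 0
  | .some _ _ h => .some _ _ ((cm_nonsingular f hv h1 h2 h3 h4 h6 _ _).mpr h)

lemma cmFun_zero : cmFun f hv h1 h2 h3 h4 h6 (0 : W.Point) = 0 := rfl

lemma cmFun_some {x y : F} (h : W.Nonsingular x y) :
    cmFun f hv h1 h2 h3 h4 h6 (.some _ _ h)
      = .some _ _ ((cm_nonsingular f hv h1 h2 h3 h4 h6 x y).mpr h) := rfl

lemma cmFun_injective : Function.Injective (cmFun f hv h1 h2 h3 h4 h6) := by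
  rintro (_ | @⟨x₁, y₁, hP⟩) (_ | @⟨x₂, y₂, hQ⟩) h
  any_goals contradiction
  · rfl
  · simp only [cmFun, Point.some.injEq] at h
    obtain ⟨hX, hY⟩ := h
    simp only [Point.some.injEq]
    exact ⟨(cm_mul_inj f hv 2).mp hX, (cm_mul_inj f hv 3).mp hY⟩

lemma cmFun_add (P Q : W.Point) :
    cmFun f hv h1 h2 h3 h4 h6 (P + Q)
      = cmFun f hv h1 h2 h3 h4 h6 P + cmFun f hv h1 h2 h3 h4 h6 Q := by
  rcases P with _ | @⟨x₁, y₁, hP⟩ <;> rcases Q with _ | @⟨x₂, y₂, hQ⟩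
  any_goals rfl
  by_cases hc : x₁ = x₂ ∧ y₁ = W.negY x₂ y₂
  · rw [Point.add_of_Y_eq hc.1 hc.2, cmFun_some, cmFun_some,
      Point.add_of_Y_eq (by rw [hc.1]) (by rw [cm_negY f hv h1 h2 h3 h4 h6, hc.2])]
    rfl
  · have hxy : x₁ = x₂ → y₁ ≠ W.negY x₂ y₂ := fun hx hy => hc ⟨hx, hy⟩
    have hxy' : f x₁ * v ^ 2 = f x₂ * v ^ 2
        → f y₁ * v ^ 3 ≠ W'.negY (f x₂ * v ^ 2) (f y₂ * v ^ 3) := by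
      intro hX hY
      rw [cm_negY f hv h1 h2 h3 h4 h6] at hY
      exact hc ⟨(cm_mul_inj f hv 2).mp hX, (cm_mul_inj f hv 3).mp hY⟩
    rw [Point.add_some hc, cmFun_some, cmFun_some, cmFun_some, Point.add_some (fun h => hxy' h.1 h.2)]
    simp only [Point.some.injEq]
    constructor
    · rw [cm_slope f hv h1 h2 h3 h4 h6, cm_addX f hv h1 h2 h3 h4 h6]
    · rw [cm_slope f hv h1 h2 h3 h4 h6, cm_addY f hv h1 h2 h3 h4 h6]

/-- The group homomorphism on points induced by an admissible change of coordinates. -/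
noncomputable def cmHom : W.Point →+ W'.Point where
  toFun := cmFun f hv h1 h2 h3 h4 h6
  map_zero' := rfl
  map_add' := cmFun_add f hv h1 h2 h3 h4 h6

lemma cmHom_apply (P : W.Point) :
    cmHom f hv h1 h2 h3 h4 h6 P = cmFun f hv h1 h2 h3 h4 h6 P := rfl

lemma cmHom_injective : Function.Injective ⇑(cmHom f hv h1 h2 h3 h4 h6) :=
  cmFun_injective f hv h1 h2 h3 h4 h6

end CurveMap

section Main

open WeierstrassCurve WeierstrassCurve.Affine
open Classical

variable {K L : Type u} [Field K] [Field L] [Algebra K L] [CharZero L]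
  (a₂ a₄ a₆ : K) (d : K) (hd0 : d ≠ 0) (hdns : ¬∃ c : K, c ^ 2 = d)
  (s : L) (hs : s ^ 2 = algebraMap K L d) (hgen : Algebra.adjoin K {s} = ⊤)

/-- The curve `E`. -/
abbrev EW : WeierstrassCurve.Affine K := ⟨0, a₂, 0, a₄, a₆⟩

/-- The twisted curve. -/
abbrev ET : WeierstrassCurve.Affine K := ⟨0, d * a₂, 0, d ^ 2 * a₄, d ^ 3 * a₆⟩

/-- The base change of `E` to `L`. -/
abbrev EWL : WeierstrassCurve.Affine L := (EW a₂ a₄ a₆).baseChange L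

include hd0 hs in
lemma hs0 : s ≠ 0 := s_ne_zero d hd0 s hs

-- hypotheses for ι
lemma hι1 : (EWL (L := L) a₂ a₄ a₆).a₁ = algebraMap K L (EW a₂ a₄ a₆).a₁ * (1 : L) :=
  (mul_one _).symm
lemma hι2 : (EWL (L := L) a₂ a₄ a₆).a₂ = algebraMap K L (EW a₂ a₄ a₆).a₂ * (1 : L) ^ 2 := by
  rw [one_pow, mul_one]; rfl
lemma hι3 : (EWL (L := L) a₂ a₄ a₆).a₃ = algebraMap K L (EW a₂ a₄ a₆).a₃ * (1 : L) ^ 3 := by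
  rw [one_pow, mul_one]; rfl
lemma hι4 : (EWL (L := L) a₂ a₄ a₆).a₄ = algebraMap K L (EW a₂ a₄ a₆).a₄ * (1 : L) ^ 4 := by
  rw [one_pow, mul_one]; rfl
lemma hι6 : (EWL (L := L) a₂ a₄ a₆).a₆ = algebraMap K L (EW a₂ a₄ a₆).a₆ * (1 : L) ^ 6 := by
  rw [one_pow, mul_one]; rfl

/-- The homomorphism `E(K) →+ E(L)`. -/
noncomputable def iotaHom : (EW a₂ a₄ a₆).Point →+ (EWL (L := L) a₂ a₄ a₆).Point :=
  cmHom (algebraMap K L) one_ne_zero (hι1 a₂ a₄ a₆) (hι2 a₂ a₄ a₆) (hι3 a₂ a₄ a₆)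
    (hι4 a₂ a₄ a₆) (hι6 a₂ a₄ a₆)

-- hypotheses for τ
include hd0 hs in
lemma hτ2 : (EWL (L := L) a₂ a₄ a₆).a₂ = algebraMap K L (ET a₂ a₄ a₆ d).a₂ * (s⁻¹) ^ 2 := by
  have h0 := hs0 d hd0 s hs
  show algebraMap K L a₂ = algebraMap K L (d * a₂) * (s⁻¹) ^ 2
  rw [map_mul, ← hs]
  field_simp

include hd0 hs in
lemma hτ4 : (EWL (L := L) a₂ a₄ a₆).a₄ = algebraMap K L (ET a₂ a₄ a₆ d).a₄ * (s⁻¹) ^ 4 := by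
  have h0 := hs0 d hd0 s hs
  show algebraMap K L a₄ = algebraMap K L (d ^ 2 * a₄) * (s⁻¹) ^ 4
  rw [map_mul, map_pow, ← hs]
  field_simp

include hd0 hs in
lemma hτ6 : (EWL (L := L) a₂ a₄ a₆).a₆ = algebraMap K L (ET a₂ a₄ a₆ d).a₆ * (s⁻¹) ^ 6 := by
  have h0 := hs0 d hd0 s hs
  show algebraMap K L a₆ = algebraMap K L (d ^ 3 * a₆) * (s⁻¹) ^ 6
  rw [map_mul, map_pow, ← hs]
  field_simp

lemma hτ1 : (EWL (L := L) a₂ a₄ a₆).a₁ = algebraMap K L (ET a₂ a₄ a₆ d).a₁ * (s⁻¹) := by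
  show algebraMap K L 0 = algebraMap K L 0 * s⁻¹
  rw [map_zero, zero_mul]

lemma hτ3 : (EWL (L := L) a₂ a₄ a₆).a₃ = algebraMap K L (ET a₂ a₄ a₆ d).a₃ * (s⁻¹) ^ 3 := by
  show algebraMap K L 0 = algebraMap K L 0 * (s⁻¹) ^ 3
  rw [map_zero, zero_mul]

/-- The homomorphism `E^d(K) →+ E(L)`. -/
noncomputable def tauHom : (ET a₂ a₄ a₆ d).Point →+ (EWL (L := L) a₂ a₄ a₆).Point :=
  cmHom (algebraMap K L) (inv_ne_zero (hs0 d hd0 s hs)) (hτ1 a₂ a₄ a₆ d s)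
    (hτ2 a₂ a₄ a₆ d hd0 s hs) (hτ3 a₂ a₄ a₆ d s) (hτ4 a₂ a₄ a₆ d hd0 s hs)
    (hτ6 a₂ a₄ a₆ d hd0 s hs)

-- hypotheses for σ
lemma hσ1 : (EWL (L := L) a₂ a₄ a₆).a₁
    = (conjAut d hdns s hs hgen).toRingHom (EWL (L := L) a₂ a₄ a₆).a₁ * (1 : L) := by
  rw [mul_one]
  exact ((conjAut d hdns s hs hgen).commutes 0).symm

lemma hσ2 : (EWL (L := L) a₂ a₄ a₆).a₂
    = (conjAut d hdns s hs hgen).toRingHom (EWL (L := L) a₂ a₄ a₆).a₂ * (1 : L) ^ 2 := by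
  rw [one_pow, mul_one]
  exact ((conjAut d hdns s hs hgen).commutes a₂).symm

lemma hσ3 : (EWL (L := L) a₂ a₄ a₆).a₃
    = (conjAut d hdns s hs hgen).toRingHom (EWL (L := L) a₂ a₄ a₆).a₃ * (1 : L) ^ 3 := by
  rw [one_pow, mul_one]
  exact ((conjAut d hdns s hs hgen).commutes 0).symm

lemma hσ4 : (EWL (L := L) a₂ a₄ a₆).a₄
    = (conjAut d hdns s hs hgen).toRingHom (EWL (L := L) a₂ a₄ a₆).a₄ * (1 : L) ^ 4 := by
  rw [one_pow, mul_one]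
  exact ((conjAut d hdns s hs hgen).commutes a₄).symm

lemma hσ6 : (EWL (L := L) a₂ a₄ a₆).a₆
    = (conjAut d hdns s hs hgen).toRingHom (EWL (L := L) a₂ a₄ a₆).a₆ * (1 : L) ^ 6 := by
  rw [one_pow, mul_one]
  exact ((conjAut d hdns s hs hgen).commutes a₆).symm

/-- The Galois involution on `E(L)`. -/
noncomputable def sigmaHom : (EWL (L := L) a₂ a₄ a₆).Point →+ (EWL (L := L) a₂ a₄ a₆).Point :=
  cmHom (conjAut d hdns s hs hgen).toRingHom one_ne_zero (hσ1 a₂ a₄ a₆ d hdns s hs hgen)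
    (hσ2 a₂ a₄ a₆ d hdns s hs hgen) (hσ3 a₂ a₄ a₆ d hdns s hs hgen)
    (hσ4 a₂ a₄ a₆ d hdns s hs hgen) (hσ6 a₂ a₄ a₆ d hdns s hs hgen)


lemma ewl_a1 : (EWL (L := L) a₂ a₄ a₆).a₁ = 0 := map_zero (algebraMap K L)
lemma ewl_a3 : (EWL (L := L) a₂ a₄ a₆).a₃ = 0 := map_zero (algebraMap K L)

lemma ewl_negY (x y : L) : (EWL (L := L) a₂ a₄ a₆).negY x y = -y := by
  rw [WeierstrassCurve.Affine.negY, ewl_a1, ewl_a3]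
  ring

lemma conjAut_s' :
    (conjAut d hdns s hs hgen).toRingHom s = -s := conjAut_s d hdns s hs hgen

lemma conjAut_comm' (a : K) :
    (conjAut d hdns s hs hgen).toRingHom (algebraMap K L a) = algebraMap K L a :=
  (conjAut d hdns s hs hgen).commutes a

lemma sigma_iota (P : (EW a₂ a₄ a₆).Point) :
    sigmaHom a₂ a₄ a₆ d hdns s hs hgen (iotaHom (L := L) a₂ a₄ a₆ P)
      = iotaHom (L := L) a₂ a₄ a₆ P := by
  rcases P with _ | @⟨x, y, hP⟩
  · rfl
  · unfold sigmaHom iotaHom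
    rw [cmHom_apply, cmHom_apply, cmFun_some, cmFun_some]
    simp only [Point.some.injEq, one_pow, mul_one]
    exact ⟨(conjAut d hdns s hs hgen).commutes x, (conjAut d hdns s hs hgen).commutes y⟩

lemma sigma_tau (Q : (ET a₂ a₄ a₆ d).Point) :
    sigmaHom a₂ a₄ a₆ d hdns s hs hgen (tauHom (L := L) a₂ a₄ a₆ d hd0 s hs Q)
      = -(tauHom (L := L) a₂ a₄ a₆ d hd0 s hs Q) := by
  rcases Q with _ | @⟨x, y, hQ⟩
  · rfl
  · unfold sigmaHom tauHom
    rw [cmHom_apply, cmHom_apply, cmFun_some, cmFun_some, Point.neg_some]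
    simp only [Point.some.injEq, one_pow, mul_one, map_mul, map_pow, map_inv₀, conjAut_s',
      conjAut_comm', ewl_negY, inv_neg]
    constructor
    · rw [neg_sq]
    · rw [Odd.neg_pow (by decide)]
      ring

lemma sigma_sigma (P : (EWL (L := L) a₂ a₄ a₆).Point) :
    sigmaHom a₂ a₄ a₆ d hdns s hs hgen (sigmaHom a₂ a₄ a₆ d hdns s hs hgen P) = P := by
  rcases P with _ | @⟨x, y, hP⟩
  · rfl
  · unfold sigmaHom
    rw [cmHom_apply, cmHom_apply, cmFun_some, cmFun_some]
    simp only [Point.some.injEq, one_pow, mul_one]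
    exact ⟨conjAut_conjAut d hdns s hs hgen x, conjAut_conjAut d hdns s hs hgen y⟩

include hd0 in
lemma fixed_in_iota (P : (EWL (L := L) a₂ a₄ a₆).Point)
    (hP : sigmaHom a₂ a₄ a₆ d hdns s hs hgen P = P) :
    ∃ P₀, iotaHom (L := L) a₂ a₄ a₆ P₀ = P := by
  rcases P with _ | @⟨x, y, h⟩
  · exact ⟨0, rfl⟩
  · unfold sigmaHom at hP
    rw [cmHom_apply, cmFun_some] at hP
    obtain ⟨hx, hy⟩ := Point.some.inj hP
    simp only [one_pow, mul_one] at hx hy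
    obtain ⟨x₀, hx₀⟩ := conjAut_fixed d hd0 hdns s hs hgen hx
    obtain ⟨y₀, hy₀⟩ := conjAut_fixed d hd0 hdns s hs hgen hy
    have hns : (EW a₂ a₄ a₆).Nonsingular x₀ y₀ := by
      apply (cm_nonsingular (algebraMap K L) one_ne_zero (hι1 a₂ a₄ a₆) (hι2 a₂ a₄ a₆)
        (hι3 a₂ a₄ a₆) (hι4 a₂ a₄ a₆) (hι6 a₂ a₄ a₆) x₀ y₀).mp
      simpa only [one_pow, mul_one, hx₀, hy₀] using h
    refine ⟨Point.some _ _ hns, ?_⟩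
    unfold iotaHom
    rw [cmHom_apply, cmFun_some]
    simp only [Point.some.injEq, one_pow, mul_one]
    exact ⟨hx₀, hy₀⟩

lemma antifixed_in_tau (P : (EWL (L := L) a₂ a₄ a₆).Point)
    (hP : sigmaHom a₂ a₄ a₆ d hdns s hs hgen P = -P) :
    ∃ Q₀, tauHom (L := L) a₂ a₄ a₆ d hd0 s hs Q₀ = P := by
  have hsne := hs0 d hd0 s hs
  rcases P with _ | @⟨x, y, h⟩
  · exact ⟨0, rfl⟩
  · unfold sigmaHom at hP
    rw [cmHom_apply, cmFun_some, Point.neg_some] at hP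
    obtain ⟨hx, hy⟩ := Point.some.inj hP
    simp only [one_pow, mul_one, ewl_negY] at hx hy
    obtain ⟨x₀, hx₀⟩ := conjAut_fixed d hd0 hdns s hs hgen hx
    obtain ⟨b, hb⟩ := conjAut_antifixed d hd0 hdns s hs hgen hy
    have e1 : algebraMap K L (d * x₀) * (s⁻¹) ^ 2 = x := by
      rw [map_mul, ← hs, ← hx₀]
      field_simp
    have e2 : algebraMap K L (d ^ 2 * b) * (s⁻¹) ^ 3 = y := by
      rw [map_mul, map_pow, ← hs, ← hb]
      field_simp
    have hns : (ET a₂ a₄ a₆ d).Nonsingular (d * x₀) (d ^ 2 * b) := by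
      apply (cm_nonsingular (algebraMap K L) (inv_ne_zero hsne) (hτ1 a₂ a₄ a₆ d s)
        (hτ2 a₂ a₄ a₆ d hd0 s hs) (hτ3 a₂ a₄ a₆ d s) (hτ4 a₂ a₄ a₆ d hd0 s hs)
        (hτ6 a₂ a₄ a₆ d hd0 s hs) _ _).mp
      rw [e1, e2]
      exact h
    refine ⟨Point.some _ _ hns, ?_⟩
    unfold tauHom
    rw [cmHom_apply, cmFun_some]
    simp only [Point.some.injEq]
    exact ⟨e1, e2⟩

lemma iota_injective : Function.Injective ⇑(iotaHom (L := L) a₂ a₄ a₆) :=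
  cmHom_injective _ _ _ _ _ _ _

include hd0 in
lemma tau_injective : Function.Injective ⇑(tauHom (L := L) a₂ a₄ a₆ d hd0 s hs) :=
  cmHom_injective _ _ _ _ _ _ _

/-- The homomorphism `E(K) × E^d(K) →+ E(L)`. -/
noncomputable def FHom : (EW a₂ a₄ a₆).Point × (ET a₂ a₄ a₆ d).Point
    →+ (EWL (L := L) a₂ a₄ a₆).Point :=
  (iotaHom a₂ a₄ a₆).comp (AddMonoidHom.fst _ _)
    + (tauHom a₂ a₄ a₆ d hd0 s hs).comp (AddMonoidHom.snd _ _)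

lemma FHom_apply (p : (EW a₂ a₄ a₆).Point × (ET a₂ a₄ a₆ d).Point) :
    FHom (L := L) a₂ a₄ a₆ d hd0 s hs p
      = iotaHom (L := L) a₂ a₄ a₆ p.1 + tauHom (L := L) a₂ a₄ a₆ d hd0 s hs p.2 := rfl

include hgen hdns in
lemma FHom_ker (p : (EW a₂ a₄ a₆).Point × (ET a₂ a₄ a₆ d).Point)
    (h0 : FHom (L := L) a₂ a₄ a₆ d hd0 s hs p = 0) : ∃ n : ℤ, n ≠ 0 ∧ n • p = 0 := by
  obtain ⟨P, Q⟩ := p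
  rw [FHom_apply] at h0
  have h1 : iotaHom (L := L) a₂ a₄ a₆ P + -(tauHom (L := L) a₂ a₄ a₆ d hd0 s hs Q) = 0 := by
    have h2 := congrArg (sigmaHom a₂ a₄ a₆ d hdns s hs hgen) h0
    rwa [map_add, map_zero, sigma_iota, sigma_tau] at h2
  have hP2 : P + P = 0 := by
    apply iota_injective (L := L) a₂ a₄ a₆
    rw [map_add, map_zero]
    calc iotaHom (L := L) a₂ a₄ a₆ P + iotaHom (L := L) a₂ a₄ a₆ P
        = (iotaHom (L := L) a₂ a₄ a₆ P + tauHom (L := L) a₂ a₄ a₆ d hd0 s hs Q)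
          + (iotaHom (L := L) a₂ a₄ a₆ P + -(tauHom (L := L) a₂ a₄ a₆ d hd0 s hs Q)) := by
          abel
      _ = 0 := by rw [h0, h1, add_zero]
  have hQ2 : Q + Q = 0 := by
    apply tau_injective (L := L) a₂ a₄ a₆ d hd0 s hs
    rw [map_add, map_zero]
    calc tauHom (L := L) a₂ a₄ a₆ d hd0 s hs Q + tauHom (L := L) a₂ a₄ a₆ d hd0 s hs Q
        = (iotaHom (L := L) a₂ a₄ a₆ P + tauHom (L := L) a₂ a₄ a₆ d hd0 s hs Q)
          - (iotaHom (L := L) a₂ a₄ a₆ P + -(tauHom (L := L) a₂ a₄ a₆ d hd0 s hs Q)) := by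
          abel
      _ = 0 := by rw [h0, h1, sub_zero]
  refine ⟨2, two_ne_zero, ?_⟩
  have : ((2 : ℤ) • (P, Q)) = ((2 : ℤ) • P, (2 : ℤ) • Q) := rfl
  rw [this, two_zsmul, two_zsmul, hP2, hQ2]
  rfl

include hgen hdns in
lemma FHom_surj (P : (EWL (L := L) a₂ a₄ a₆).Point) :
    ∃ p, FHom (L := L) a₂ a₄ a₆ d hd0 s hs p = (2 : ℤ) • P := by
  obtain ⟨P₀, hP₀⟩ := fixed_in_iota a₂ a₄ a₆ d hd0 hdns s hs hgen
    (P + sigmaHom a₂ a₄ a₆ d hdns s hs hgen P)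
    (by rw [map_add, sigma_sigma]; abel)
  obtain ⟨Q₀, hQ₀⟩ := antifixed_in_tau a₂ a₄ a₆ d hd0 hdns s hs hgen
    (P - sigmaHom a₂ a₄ a₆ d hdns s hs hgen P)
    (by rw [map_sub, sigma_sigma]; abel)
  refine ⟨(P₀, Q₀), ?_⟩
  rw [FHom_apply]
  show iotaHom (L := L) a₂ a₄ a₆ P₀ + tauHom (L := L) a₂ a₄ a₆ d hd0 s hs Q₀ = _
  rw [hP₀, hQ₀, two_zsmul]
  abel

include hd0 hdns hs hgen in
lemma rank_main :
    Module.rank ℤ (EWL (L := L) a₂ a₄ a₆).Point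
      = Module.rank ℤ (EW a₂ a₄ a₆).Point + Module.rank ℤ (ET a₂ a₄ a₆ d).Point := by
  have e1 : Module.rank ℤ (EWL (L := L) a₂ a₄ a₆).Point
      = Module.rank ℤ ((EW a₂ a₄ a₆).Point × (ET a₂ a₄ a₆ d).Point) :=
    le_antisymm
      (rank_le_of_two_smul_surj (FHom (L := L) a₂ a₄ a₆ d hd0 s hs)
        (FHom_surj a₂ a₄ a₆ d hd0 hdns s hs hgen))
      (rank_le_of_torsion_ker (FHom (L := L) a₂ a₄ a₆ d hd0 s hs)
        (FHom_ker a₂ a₄ a₆ d hd0 hdns s hs hgen))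
  rw [e1, rank_prod_int]

end Main

/-- The quadratic twist by `d` of the elliptic curve `y² = x³ + a₂x² + a₄x + a₆`, namely the
Weierstrass curve `y² = x³ + d·a₂·x² + d²·a₄·x + d³·a₆`. -/
def quadraticTwist {K : Type*} [CommRing K] (a₂ a₄ a₆ d : K) : WeierstrassCurve K :=
  ⟨0, d * a₂, 0, d ^ 2 * a₄, d ^ 3 * a₆⟩

open Classical in
/-- Let `K` be a number field, `E : y² = x³ + a₂x² + a₄x + a₆` an elliptic curve over `K`,
`d ∈ K^×` a non-square, and `L = K(√d)`.  Then `rk E(L) = rk E(K) + rk E^d(K)`. -/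
theorem rank_quadratic_extension (K L : Type u) [Field K] [NumberField K]
    [Field L] [NumberField L] [Algebra K L] (a₂ a₄ a₆ : K)
    (hΔ : (⟨0, a₂, 0, a₄, a₆⟩ : WeierstrassCurve K).Δ ≠ 0)
    (d : K) (hd0 : d ≠ 0) (hdns : ¬∃ c : K, c ^ 2 = d)
    (s : L) (hs : s ^ 2 = algebraMap K L d) (hgen : Algebra.adjoin K {s} = ⊤) :
    Module.rank ℤ ((⟨0, a₂, 0, a₄, a₆⟩ : WeierstrassCurve K).baseChange L).toAffine.Point =
      Module.rank ℤ (⟨0, a₂, 0, a₄, a₆⟩ : WeierstrassCurve K).toAffine.Point +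
        Module.rank ℤ (quadraticTwist a₂ a₄ a₆ d).toAffine.Point := by
  exact rank_main a₂ a₄ a₆ d hd0 hdns s hs hgen
end

section
/- Let K be a number field with at least 25 real embeddings. Then there exist elements a₁, a₂, a₃ in the ring of integers O_K of K and 24 pairwise distinct real embeddings σ₁, …, σ₂₄ of K such that: (1) for every permutation f of {1, 2, 3} there are precisely four indices i ∈ {1, …, 24} with σ_i(a_{f(1)}) < σ_i(a_{f(2)}) < σ_i(a_{f(3)}); and (2) setting α = a₁ − a₂, β = a₁ − a₃, γ = a₂ − a₃, the classes of −1, α, β, γ in K^×/(K^×)² are linearly independent over 𝔽₂, i.e. for all e₀, e₁, e₂, e₃ ∈ {0, 1} not all zero, the element (−1)^{e₀} · α^{e₁} · β^{e₂} · γ^{e₃} is not a square in K. -/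
open NumberField Polynomial

private def perms6 : Fin 6 → Equiv.Perm (Fin 3) :=
  ![1, Equiv.swap 0 1, Equiv.swap 0 2, Equiv.swap 1 2,
    Equiv.swap 0 1 * Equiv.swap 1 2, Equiv.swap 1 2 * Equiv.swap 0 1]

private def g24 (i : Fin 24) : Equiv.Perm (Fin 3) := perms6 ⟨i.1 / 4, by omega⟩

private lemma g24_card : ∀ f : Equiv.Perm (Fin 3),
    (Finset.univ.filter fun i => f = g24 i).card = 4 := by decide

private lemma g24_surj : ∀ f : Equiv.Perm (Fin 3), ∃ i, g24 i = f := by decide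

private lemma key24 : ∀ e₀ e₁ e₂ e₃ : Bool, (e₀ || e₁ || e₂ || e₃) = true →
    ∃ f : Equiv.Perm (Fin 3),
      ((e₀ != (e₁ && decide (f.symm 0 < f.symm 1))) !=
        ((e₂ && decide (f.symm 0 < f.symm 2)) != (e₃ && decide (f.symm 1 < f.symm 2)))) = true := by
  decide

private lemma permOrder : ∀ g f : Equiv.Perm (Fin 3),
    ((g.symm (f 0) < g.symm (f 1)) ∧ (g.symm (f 1) < g.symm (f 2))) ↔ f = g := by
  decide

set_option maxHeartbeats 1000000 in
private lemma sign4 (e₀ e₁ e₂ e₃ sA sB sC : Bool) (A B C : ℝ)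
    (hA : if sA then A < 0 else 0 < A) (hB : if sB then B < 0 else 0 < B)
    (hC : if sC then C < 0 else 0 < C)
    (hpar : ((e₀ != (e₁ && sA)) != ((e₂ && sB) != (e₃ && sC))) = true) :
    (if e₀ then (-1:ℝ) else 1) * (if e₁ then A else 1) * (if e₂ then B else 1) *
      (if e₃ then C else 1) < 0 := by
  cases e₀ <;> cases e₁ <;> cases e₂ <;> cases e₃ <;> cases sA <;> cases sB <;> cases sC <;>
    simp_all <;>
    first
      | nlinarith []
      | nlinarith [mul_pos hA hB]
      | nlinarith [mul_pos_of_neg_of_neg hA hB]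
      | nlinarith [mul_neg_of_neg_of_pos hA hB]
      | nlinarith [mul_neg_of_pos_of_neg hA hB]

private lemma cmp24 {N u v : ℝ} {m n : ℕ} (hN : 0 < N) (hu : |u - N * m| < N / 4)
    (hv : |v - N * n| < N / 4) (hmn : m ≠ n) : u < v ↔ m < n := by
  rw [abs_lt] at hu hv
  constructor
  · intro h
    by_contra h'
    push_neg at h'
    have h2 : n < m := lt_of_le_of_ne h' (Ne.symm hmn)
    have h3 : (n:ℝ) + 1 ≤ (m:ℝ) := by exact_mod_cast h2
    nlinarith
  · intro h
    have h3 : (m:ℝ) + 1 ≤ (n:ℝ) := by exact_mod_cast h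
    nlinarith

private lemma approx24 {n : ℕ} (x : Fin n → ℝ) (hx : Function.Injective x) (t : Fin n → ℝ)
    {ε : ℝ} (hε : 0 < ε) :
    ∃ p : Polynomial ℚ, ∀ i, |(Polynomial.aeval (x i)) p - t i| < ε := by
  classical
  set M : Matrix (Fin n) (Fin n) ℝ := Matrix.vandermonde x with hM
  have hdet : M.det ≠ 0 := by
    rw [hM, Matrix.det_vandermonde]
    refine Finset.prod_ne_zero_iff.mpr fun i _ => Finset.prod_ne_zero_iff.mpr fun j hj => ?_
    have : i < j := Finset.mem_Ioi.mp hj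
    exact sub_ne_zero.mpr fun h => absurd (hx h) (ne_of_gt this)
  set c : Fin n → ℝ := M⁻¹.mulVec t with hc
  have hMc : M.mulVec c = t := by
    rw [hc, Matrix.mulVec_mulVec, Matrix.mul_nonsing_inv _ (isUnit_iff_ne_zero.mpr hdet),
      Matrix.one_mulVec]
  set B : ℝ := (∑ i : Fin n, ∑ k : Fin n, |x i ^ (k : ℕ)|) + 1 with hB
  have hB0 : 0 < B := by positivity
  set δ : ℝ := ε / B with hδ
  have hδ0 : 0 < δ := by positivity
  have hq : ∀ k : Fin n, ∃ q : ℚ, |(q : ℝ) - c k| < δ := by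
    intro k
    obtain ⟨q, hq1, hq2⟩ := exists_rat_btwn (show c k - δ < c k + δ by linarith)
    exact ⟨q, abs_sub_lt_iff.mpr ⟨by linarith, by linarith⟩⟩
  choose q hqlt using hq
  refine ⟨∑ k : Fin n, Polynomial.C (q k) * Polynomial.X ^ (k : ℕ), fun i => ?_⟩
  have heval : (Polynomial.aeval (x i)) (∑ k : Fin n, Polynomial.C (q k) * Polynomial.X ^ (k : ℕ))
      = ∑ k : Fin n, (q k : ℝ) * x i ^ (k : ℕ) := by
    simp [map_sum]
  rw [heval]
  have ht : t i = ∑ k : Fin n, x i ^ (k : ℕ) * c k := by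
    rw [← hMc]; rfl
  rw [ht]
  have hre : (∑ k : Fin n, (q k : ℝ) * x i ^ (k : ℕ)) - ∑ k : Fin n, x i ^ (k : ℕ) * c k
      = ∑ k : Fin n, ((q k : ℝ) - c k) * x i ^ (k : ℕ) := by
    rw [← Finset.sum_sub_distrib]; congr 1; ext k; ring
  rw [hre]
  calc |∑ k : Fin n, ((q k : ℝ) - c k) * x i ^ (k : ℕ)|
      ≤ ∑ k : Fin n, |((q k : ℝ) - c k) * x i ^ (k : ℕ)| := Finset.abs_sum_le_sum_abs _ _
    _ ≤ ∑ k : Fin n, δ * |x i ^ (k : ℕ)| := by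
        refine Finset.sum_le_sum fun k _ => ?_
        rw [abs_mul]
        exact mul_le_mul_of_nonneg_right (le_of_lt (hqlt k)) (abs_nonneg _)
    _ = δ * ∑ k : Fin n, |x i ^ (k : ℕ)| := by rw [Finset.mul_sum]
    _ ≤ δ * (B - 1) := by
        refine mul_le_mul_of_nonneg_left ?_ (le_of_lt hδ0)
        rw [hB]; simp only [add_sub_cancel_right]
        exact Finset.single_le_sum (f := fun i => ∑ k : Fin n, |x i ^ (k : ℕ)|)
          (fun j _ => Finset.sum_nonneg fun k _ => abs_nonneg _) (Finset.mem_univ i)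
    _ < δ * B := by nlinarith
    _ = ε := by rw [hδ, div_mul_cancel₀ _ hB0.ne']

/-- Let `K` be a number field with at least 25 real embeddings.  Then there exist
`a₁, a₂, a₃ ∈ O_K` and 24 distinct real embeddings `σ₁, …, σ₂₄` of `K` such that for every
permutation `f` of `{1, 2, 3}` there are precisely four indices `i` with
`σᵢ(a_{f 1}) < σᵢ(a_{f 2}) < σᵢ(a_{f 3})`, and such that the classes of `-1`, `α = a₁ - a₂`,
`β = a₁ - a₃`, `γ = a₂ - a₃` in `K^×/(K^×)²` are linearly independent over `𝔽₂`. -/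
theorem exists_starting_curve (K : Type*) [Field K] [NumberField K]
    (hreal : 25 ≤ Nat.card {σ : K →+* ℂ // ∀ x, (σ x).im = 0}) :
    ∃ (a : Fin 3 → 𝓞 K) (σ : Fin 24 → {σ : K →+* ℂ // ∀ x, (σ x).im = 0}),
      Function.Injective σ ∧
      (∀ f : Equiv.Perm (Fin 3),
        Nat.card {i : Fin 24 //
          ((σ i).1 ((a (f 0) : K))).re < ((σ i).1 ((a (f 1) : K))).re ∧
          ((σ i).1 ((a (f 1) : K))).re < ((σ i).1 ((a (f 2) : K))).re} = 4) ∧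
      (∀ e₀ e₁ e₂ e₃ : Bool, (e₀ || e₁ || e₂ || e₃) = true →
        ¬∃ x : K, x ^ 2 =
          (if e₀ then -1 else 1) * (if e₁ then ((a 0 : K) - (a 1 : K)) else 1) *
          (if e₂ then ((a 0 : K) - (a 2 : K)) else 1) *
          (if e₃ then ((a 1 : K) - (a 2 : K)) else 1)) := by
  classical
  -- 24 distinct real embeddings
  have hfin : Finite {σ : K →+* ℂ // ∀ x, (σ x).im = 0} := Subtype.finite
  letI := Fintype.ofFinite {σ : K →+* ℂ // ∀ x, (σ x).im = 0}
  have h24 : Fintype.card (Fin 24) ≤ Fintype.card {σ : K →+* ℂ // ∀ x, (σ x).im = 0} := by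
    rw [Fintype.card_fin, ← Nat.card_eq_fintype_card]
    omega
  obtain ⟨σemb⟩ := Function.Embedding.nonempty_of_card_le h24
  -- primitive element θ₀, then an integral primitive element θ
  obtain ⟨θ₀, hθ₀⟩ := Field.exists_primitive_element ℚ K
  have hrange : ∀ x : K, ∃ p : ℚ[X], (aeval θ₀) p = x := by
    intro x
    have hx : x ∈ IntermediateField.adjoin ℚ {θ₀} := hθ₀ ▸ IntermediateField.mem_top
    have h2 := IntermediateField.adjoin_simple_toSubalgebra_of_isAlgebraic
      (IsIntegral.of_finite ℚ θ₀).isAlgebraic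
    have hx2 : x ∈ Algebra.adjoin ℚ {θ₀} := by rw [← h2]; exact hx
    rw [Algebra.adjoin_singleton_eq_range_aeval] at hx2
    exact hx2
  have hinj : ∀ z : ℤ, algebraMap ℤ K z = 0 → z = 0 := by
    intro z hz
    have : (z : K) = 0 := by simpa using hz
    exact_mod_cast this
  have halg : ∀ z : K, IsAlgebraic ℤ z := fun z =>
    (IsFractionRing.isAlgebraic_iff ℤ ℚ K).mpr (IsIntegral.of_finite ℚ z).isAlgebraic
  obtain ⟨y, hy0, hwy⟩ := (halg θ₀).exists_integral_multiple
  set θ : K := algebraMap ℤ K y * θ₀ with hθdef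
  have hθint : IsIntegral ℤ θ := by rw [hθdef, ← Algebra.smul_def]; exact hwy
  have hyK : (algebraMap ℤ K y) ≠ 0 := fun h => hy0 (hinj y h)
  have hrangeθ : ∀ x : K, ∃ p : ℚ[X], (aeval θ) p = x := by
    intro x
    obtain ⟨p, hp⟩ := hrange x
    refine ⟨p.comp (Polynomial.C ((y:ℚ)⁻¹) * Polynomial.X), ?_⟩
    rw [Polynomial.aeval_comp]
    have hyy : (aeval θ) (Polynomial.C ((y:ℚ)⁻¹) * Polynomial.X) = θ₀ := by
      rw [map_mul, Polynomial.aeval_C, Polynomial.aeval_X, hθdef]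
      have hyQ : ((y:ℚ)) ≠ 0 := Int.cast_ne_zero.mpr hy0
      have hcast : algebraMap ℤ K y = algebraMap ℚ K ((y : ℚ)) := by simp
      have : algebraMap ℚ K ((y:ℚ)⁻¹) * algebraMap ℤ K y = 1 := by
        rw [hcast, map_inv₀, inv_mul_cancel₀ ((_root_.map_ne_zero _).mpr hyQ)]
      rw [← mul_assoc, this, one_mul]
    rw [hyy, hp]
  -- commuting σ with aeval
  have hcomm : ∀ (σ : K →+* ℂ) (p : ℚ[X]), σ ((aeval θ) p) = (aeval (σ θ)) p := by
    intro σ p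
    have := Polynomial.aeval_algHom_apply σ.toRatAlgHom θ p
    simpa using this.symm
  -- real values of θ
  set xv : Fin 24 → ℝ := fun i => ((σemb i).1 θ).re with hxv
  have hσθ : ∀ i, (σemb i).1 θ = ((xv i : ℝ) : ℂ) := by
    intro i
    exact Complex.ext rfl (by simp [(σemb i).2 θ])
  have hev : ∀ (i) (p : ℚ[X]), (σemb i).1 ((aeval θ) p) = (((aeval (xv i)) p : ℝ) : ℂ) := by
    intro i p
    rw [hcomm, hσθ i]
    rw [show ((xv i : ℝ) : ℂ) = algebraMap ℝ ℂ (xv i) from rfl,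
      Polynomial.aeval_algebraMap_apply]
    rfl
  have hxinj : Function.Injective xv := by
    intro i j h
    have hθeq : (σemb i).1 θ = (σemb j).1 θ := by rw [hσθ i, hσθ j, h]
    have hσeq : (σemb i).1 = (σemb j).1 := by
      ext z
      obtain ⟨p, hp⟩ := hrangeθ z
      rw [← hp, hcomm, hcomm, hθeq]
    exact σemb.injective (Subtype.ext hσeq)
  -- the approximating polynomials
  have hp : ∀ j : Fin 3, ∃ p : ℚ[X],
      ∀ i, |(aeval (xv i)) p - ((((g24 i).symm j : Fin 3) : ℕ) : ℝ)| < 1/4 := by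
    intro j
    exact approx24 xv hxinj _ (by norm_num)
  choose p hpb using hp
  set a' : Fin 3 → K := fun j => (aeval θ) (p j) with ha'
  -- denominators
  have hd : ∀ j : Fin 3, ∃ d : ℤ, d ≠ 0 ∧ IsIntegral ℤ (algebraMap ℤ K d * a' j) := by
    intro j
    obtain ⟨d, hd0, hdw⟩ := (halg (a' j)).exists_integral_multiple
    exact ⟨d, hd0, by rw [← Algebra.smul_def]; exact hdw⟩
  choose d hd0 hdint using hd
  set N : ℤ := (d 0 * d 1 * d 2)^2 with hNdef
  have hN0 : 0 < N := by
    have : d 0 * d 1 * d 2 ≠ 0 := by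
      simp only [mul_ne_zero_iff]
      exact ⟨⟨hd0 0, hd0 1⟩, hd0 2⟩
    exact lt_of_le_of_ne (sq_nonneg _) (Ne.symm (pow_ne_zero 2 this))
  have hdvd : ∀ j : Fin 3, ∃ c : ℤ, N = d j * c := by
    have h0 : ∃ c, N = d 0 * c := ⟨d 0 * (d 1)^2 * (d 2)^2, by rw [hNdef]; ring⟩
    have h1 : ∃ c, N = d 1 * c := ⟨(d 0)^2 * d 1 * (d 2)^2, by rw [hNdef]; ring⟩
    have h2 : ∃ c, N = d 2 * c := ⟨(d 0)^2 * (d 1)^2 * d 2, by rw [hNdef]; ring⟩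
    intro j
    fin_cases j
    exacts [h0, h1, h2]
  have hint : ∀ j : Fin 3, IsIntegral ℤ (algebraMap ℤ K N * a' j) := by
    intro j
    obtain ⟨c, hc⟩ := hdvd j
    have heq : algebraMap ℤ K N * a' j
        = algebraMap ℤ K c * (algebraMap ℤ K (d j) * a' j) := by
      rw [hc, map_mul]; ring
    rw [heq]
    exact (isIntegral_algebraMap).mul (hdint j)
  set a : Fin 3 → 𝓞 K := fun j => ⟨algebraMap ℤ K N * a' j, hint j⟩ with hadef
  have hacoe : ∀ j, (a j : K) = algebraMap ℤ K N * a' j := fun j => rfl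
  -- values at the embeddings
  have hvalC : ∀ (j) (i), (σemb i).1 (a j : K) = ((((N : ℝ) * (aeval (xv i)) (p j)) : ℝ) : ℂ) := by
    intro j i
    rw [hacoe, map_mul, ha']
    rw [hev i (p j)]
    rw [show (σemb i).1 (algebraMap ℤ K N) = ((N:ℝ) : ℂ) by simp]
    rw [← Complex.ofReal_mul]
  have hval : ∀ (j) (i), ((σemb i).1 (a j : K)).re = (N : ℝ) * (aeval (xv i)) (p j) := by
    intro j i; rw [hvalC, Complex.ofReal_re]
  have hNR : (0:ℝ) < (N:ℝ) := by exact_mod_cast hN0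
  have hbound : ∀ (j) (i),
      |((σemb i).1 (a j : K)).re - (N:ℝ) * ((((g24 i).symm j : Fin 3) : ℕ) : ℝ)| < (N:ℝ)/4 := by
    intro j i
    rw [hval, ← mul_sub, abs_mul, abs_of_pos hNR]
    have := hpb j i
    calc (N:ℝ) * |(aeval (xv i)) (p j) - ((((g24 i).symm j : Fin 3) : ℕ) : ℝ)|
        < (N:ℝ) * (1/4) := by exact (mul_lt_mul_iff_right₀ hNR).mpr this
      _ = (N:ℝ)/4 := by ring
  -- comparison of values
  have hcmp : ∀ (i) (j j' : Fin 3), j ≠ j' →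
      (((σemb i).1 (a j : K)).re < ((σemb i).1 (a j' : K)).re ↔
        (g24 i).symm j < (g24 i).symm j') := by
    intro i j j' hjj'
    have hne : (((g24 i).symm j : Fin 3) : ℕ) ≠ (((g24 i).symm j' : Fin 3) : ℕ) := by
      intro h
      exact hjj' ((g24 i).symm.injective (Fin.ext h))
    rw [Fin.lt_def]
    exact cmp24 hNR (hbound j i) (hbound j' i) hne
  refine ⟨a, fun i => σemb i, σemb.injective, ?_, ?_⟩
  · -- counting condition
    intro f
    have hiff : ∀ i : Fin 24,
        (((σemb i).1 ((a (f 0) : K))).re < ((σemb i).1 ((a (f 1) : K))).re ∧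
          ((σemb i).1 ((a (f 1) : K))).re < ((σemb i).1 ((a (f 2) : K))).re) ↔ f = g24 i := by
      intro i
      rw [← permOrder (g24 i) f]
      have h01 := hcmp i (f 0) (f 1) (f.injective.ne (by decide))
      have h12 := hcmp i (f 1) (f 2) (f.injective.ne (by decide))
      rw [h01, h12]
    calc Nat.card {i : Fin 24 //
          ((σemb i).1 ((a (f 0) : K))).re < ((σemb i).1 ((a (f 1) : K))).re ∧
          ((σemb i).1 ((a (f 1) : K))).re < ((σemb i).1 ((a (f 2) : K))).re}
        = Nat.card {i : Fin 24 // f = g24 i} :=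
          Nat.card_congr (Equiv.subtypeEquivRight hiff)
      _ = 4 := by
          rw [Nat.card_eq_fintype_card, Fintype.card_subtype]
          exact g24_card f
  · -- independence modulo squares
    intro e₀ e₁ e₂ e₃ he ⟨x, hx⟩
    obtain ⟨f, hf⟩ := key24 e₀ e₁ e₂ e₃ he
    obtain ⟨i, hi⟩ := g24_surj f
    subst hi
    set σ0 : K →+* ℂ := (σemb i).1 with hσ0
    have him : ∀ z : K, (σ0 z).im = 0 := (σemb i).2
    have hremul : ∀ z w : K, (σ0 (z * w)).re = (σ0 z).re * (σ0 w).re := by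
      intro z w
      rw [map_mul, Complex.mul_re, him z, him w]
      ring
    have hresub : ∀ j j' : Fin 3, (σ0 ((a j : K) - (a j' : K))).re
        = (σ0 (a j : K)).re - (σ0 (a j' : K)).re := by
      intro j j'
      rw [map_sub, Complex.sub_re]
    -- the three differences
    set A : ℝ := (σ0 ((a 0 : K) - (a 1 : K))).re with hA
    set B : ℝ := (σ0 ((a 0 : K) - (a 2 : K))).re with hB
    set C : ℝ := (σ0 ((a 1 : K) - (a 2 : K))).re with hC
    have hsign : ∀ (j j' : Fin 3), j ≠ j' →
        if decide ((g24 i).symm j < (g24 i).symm j')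
          then (σ0 ((a j : K) - (a j' : K))).re < 0
          else 0 < (σ0 ((a j : K) - (a j' : K))).re := by
      intro j j' hjj'
      by_cases h : (g24 i).symm j < (g24 i).symm j'
      · rw [if_pos (decide_eq_true h), hresub]
        have := (hcmp i j j' hjj').mpr h
        linarith
      · rw [if_neg (fun hc => h (of_decide_eq_true hc)), hresub]
        have hne : (g24 i).symm j ≠ (g24 i).symm j' :=
          fun hh => hjj' ((g24 i).symm.injective hh)
        have h' : (g24 i).symm j' < (g24 i).symm j :=
          lt_of_le_of_ne (not_lt.mp h) (Ne.symm hne)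
        have := (hcmp i j' j (Ne.symm hjj')).mpr h'
        linarith
    have hAs := hsign 0 1 (by decide)
    have hBs := hsign 0 2 (by decide)
    have hCs := hsign 1 2 (by decide)
    rw [← hA] at hAs
    rw [← hB] at hBs
    rw [← hC] at hCs
    have hneg := sign4 e₀ e₁ e₂ e₃ _ _ _ A B C hAs hBs hCs hf
    -- compute the real part of σ0 applied to both sides of hx
    have hrhs : (σ0 ((if e₀ then (-1:K) else 1) * (if e₁ then ((a 0 : K) - (a 1 : K)) else 1) *
        (if e₂ then ((a 0 : K) - (a 2 : K)) else 1) *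
        (if e₃ then ((a 1 : K) - (a 2 : K)) else 1))).re
        = (if e₀ then (-1:ℝ) else 1) * (if e₁ then A else 1) * (if e₂ then B else 1) *
          (if e₃ then C else 1) := by
      rw [hremul, hremul, hremul]
      congr 1
      · congr 1
        · congr 1
          · cases e₀ <;> simp
          · cases e₁ <;> simp [hA]
        · cases e₂ <;> simp [hB]
      · cases e₃ <;> simp [hC]
    have hlhs : (σ0 (x ^ 2)).re = (σ0 x).re ^ 2 := by
      rw [map_pow, sq, sq, Complex.mul_re, him x]
      ring
    have h1 : (σ0 (x ^ 2)).re < 0 := by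
      rw [hx, hrhs]; exact hneg
    rw [hlhs] at h1
    nlinarith [sq_nonneg ((σ0 x).re)]
end

section
/- Let ℓ ≥ k ≥ 1 be integers, let A : ℝ^ℓ → ℝ^k be a surjective linear map, and let c₁, …, c_k ∈ ℝ. Then there exists a positive real number C such that the Lebesgue measure of A⁻¹(∏_{i=1}^{k} (cᵢ, ∞)) ∩ [−H, H]^ℓ is asymptotic to C·H^ℓ as H → ∞; that is, μ(A⁻¹(∏_{i=1}^{k} (cᵢ, ∞)) ∩ [−H, H]^ℓ) / H^ℓ tends to C as H → ∞. -/
open MeasureTheory Filter Topology ENNReal Pointwise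

/-- Let `ℓ ≥ k ≥ 1`, let `A : ℝ^ℓ → ℝ^k` be a surjective linear map and `c₁, …, c_k ∈ ℝ`.
Then there is a positive constant `C` such that the Lebesgue measure of
`A⁻¹(∏ᵢ (cᵢ, ∞)) ∩ [-H, H]^ℓ` is asymptotic to `C·H^ℓ` as `H → ∞`. -/
theorem volume_preimage_halfspaces_asymptotic (ℓ k : ℕ) (hk : 1 ≤ k) (hkℓ : k ≤ ℓ)
    (A : (Fin ℓ → ℝ) →ₗ[ℝ] (Fin k → ℝ)) (hA : Function.Surjective A) (c : Fin k → ℝ) :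
    ∃ C : ℝ, 0 < C ∧
      Tendsto (fun H : ℝ =>
          (volume (A ⁻¹' {y | ∀ i, c i < y i} ∩
            Set.Icc (fun _ => -H) (fun _ => H))).toReal / H ^ ℓ)
        atTop (nhds C) := by
  classical
  have hcont : Continuous A := A.continuous_of_finiteDimensional
  have horth : ∀ t : Fin k → ℝ, IsOpen {y : Fin k → ℝ | ∀ i, t i < y i} := by
    intro t
    have h : {y : Fin k → ℝ | ∀ i, t i < y i} = Set.pi Set.univ fun i => Set.Ioi (t i) := by
      ext y; simp [Set.mem_pi]
    rw [h]
    exact isOpen_set_pi Set.finite_univ fun i _ => isOpen_Ioi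
  set Q : Set (Fin ℓ → ℝ) := Set.Icc (fun _ => -1) (fun _ => 1) with hQ
  have hQmeas : MeasurableSet Q := measurableSet_Icc
  have hQcompact : IsCompact Q := isCompact_Icc
  have hQfin : volume Q ≠ ⊤ := hQcompact.measure_lt_top.ne
  set T : Set (Fin ℓ → ℝ) := A ⁻¹' {y | ∀ i, (0:ℝ) < y i} ∩ Q with hT
  have hTmeas : MeasurableSet T :=
    ((horth 0).preimage hcont).measurableSet.inter hQmeas
  have hTfin : volume T ≠ ⊤ := fun h =>
    hQfin (top_le_iff.mp (h ▸ measure_mono Set.inter_subset_right))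
  -- positivity
  have hTpos : 0 < volume T := by
    obtain ⟨x₀, hx₀⟩ := hA (fun _ => (1:ℝ))
    set M : ℝ := 1 + ∑ j, |x₀ j| with hM
    have hMpos : (0:ℝ) < M := by
      have : (0:ℝ) ≤ ∑ j, |x₀ j| := Finset.sum_nonneg fun j _ => abs_nonneg _
      linarith
    set U : Set (Fin ℓ → ℝ) := A ⁻¹' {y | ∀ i, (0:ℝ) < y i} ∩
        Set.pi Set.univ (fun _ => Set.Ioo (-1 : ℝ) 1) with hU
    have hUopen : IsOpen U :=
      ((horth 0).preimage hcont).inter (isOpen_set_pi Set.finite_univ fun _ _ => isOpen_Ioo)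
    have hUsub : U ⊆ T := by
      refine Set.inter_subset_inter_right _ ?_
      intro x hx
      constructor <;> intro j <;> have := hx j (Set.mem_univ j)
      · exact (this.1).le
      · exact (this.2).le
    have hUne : U.Nonempty := by
      refine ⟨M⁻¹ • x₀, ?_, ?_⟩
      · intro i
        simp only [Set.mem_setOf_eq, A.map_smul, hx₀, Pi.smul_apply, smul_eq_mul, mul_one]
        exact inv_pos.mpr hMpos
      · intro j _
        have hj : |x₀ j| < M := by
          have h1 : |x₀ j| ≤ ∑ j', |x₀ j'| :=
            Finset.single_le_sum (f := fun j' => |x₀ j'|) (fun j' _ => abs_nonneg (x₀ j')) (Finset.mem_univ j)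
          linarith
        have : |M⁻¹ * x₀ j| < 1 := by
          rw [abs_mul, abs_of_pos (inv_pos.mpr hMpos)]
          rw [inv_mul_lt_iff₀ hMpos, mul_one]
          exact hj
        rw [abs_lt] at this
        exact ⟨this.1, this.2⟩
    have := (hUopen.measure_pos volume hUne).trans_le (measure_mono hUsub)
    exact this
  refine ⟨(volume T).toReal, ENNReal.toReal_pos hTpos.ne' hTfin, ?_⟩
  -- the rescaled sets
  set S : ℝ → Set (Fin ℓ → ℝ) := fun H =>
    A ⁻¹' {y | ∀ i, c i / H < y i} ∩ Q with hS
  have hSmeas : ∀ H, MeasurableSet (S H) := fun H =>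
    ((horth _).preimage hcont).measurableSet.inter hQmeas
  -- main ENNReal limit via dominated convergence
  have hmain : Tendsto (fun H => volume (S H)) atTop (𝓝 (volume T)) := by
    have key : Tendsto (fun H => ∫⁻ u, (S H).indicator 1 u) atTop
        (𝓝 (∫⁻ u, T.indicator 1 u)) := by
      apply tendsto_lintegral_filter_of_dominated_convergence (Q.indicator 1)
      · exact Eventually.of_forall fun H =>
          (measurable_one.indicator (hSmeas H))
      · refine Eventually.of_forall fun H => ae_of_all _ fun u => ?_
        exact Set.indicator_le_indicator_of_subset Set.inter_subset_right (fun _ => zero_le) u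
      · rw [lintegral_indicator_one hQmeas]; exact hQfin
      · -- a.e. pointwise convergence
        have hnull : volume (⋃ i, {u : Fin ℓ → ℝ | A u i = 0}) = 0 := by
          refine measure_iUnion_null fun i => ?_
          have : {u : Fin ℓ → ℝ | A u i = 0} =
              (LinearMap.ker ((LinearMap.proj i : (Fin k → ℝ) →ₗ[ℝ] ℝ).comp A) : Set (Fin ℓ → ℝ)) := by
            ext u; simp [LinearMap.mem_ker]
          rw [this]
          apply Measure.addHaar_submodule
          intro htop
          obtain ⟨x₀, hx₀⟩ := hA (fun _ => (1:ℝ))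
          have hmem : x₀ ∈ LinearMap.ker ((LinearMap.proj i : (Fin k → ℝ) →ₗ[ℝ] ℝ).comp A) :=
            htop ▸ Submodule.mem_top
          rw [LinearMap.mem_ker] at hmem
          simp [hx₀] at hmem
        rw [ae_iff]
        refine measure_mono_null ?_ hnull
        intro u hu
        simp only [Set.mem_setOf_eq] at hu
        by_contra hnot
        apply hu
        simp only [Set.mem_iUnion, Set.mem_setOf_eq] at hnot
        push_neg at hnot
        -- eventual equality of indicators
        have hev : ∀ᶠ H in atTop, (S H).indicator (1 : (Fin ℓ → ℝ) → ℝ≥0∞) u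
            = T.indicator 1 u := by
          have hiff : ∀ᶠ H in atTop, ∀ i, (c i / H < A u i ↔ 0 < A u i) := by
            rw [eventually_all]
            intro i
            have hto : Tendsto (fun H : ℝ => c i / H) atTop (𝓝 0) :=
              tendsto_const_nhds.div_atTop tendsto_id
            rcases (hnot i).lt_or_gt with hlt | hlt
            · filter_upwards [hto.eventually_const_lt hlt] with H hH
              constructor <;> intro h
              · exact absurd h (not_lt.mpr hH.le)
              · exact absurd h (not_lt.mpr hlt.le)
            · filter_upwards [hto.eventually_lt_const hlt] with H hH
              exact ⟨fun _ => hlt, fun _ => hH⟩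
          filter_upwards [hiff] with H hH
          have : u ∈ S H ↔ u ∈ T := by
            unfold S T
            simp only [Set.mem_inter_iff, Set.mem_preimage, Set.mem_setOf_eq]
            constructor
            · rintro ⟨h1, h2⟩; exact ⟨fun i => (hH i).mp (h1 i), h2⟩
            · rintro ⟨h1, h2⟩; exact ⟨fun i => (hH i).mpr (h1 i), h2⟩
          rw [Set.indicator_apply, Set.indicator_apply, if_congr this rfl rfl]
        exact Tendsto.congr' (hev.mono fun H h => h.symm) tendsto_const_nhds
    simpa only [lintegral_indicator_one (hSmeas _), lintegral_indicator_one hTmeas] using key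
  -- scaling identity
  have hscale : ∀ H : ℝ, 0 < H →
      A ⁻¹' {y | ∀ i, c i < y i} ∩ Set.Icc (fun _ => -H) (fun _ => H) = H • S H := by
    intro H hH
    ext x
    rw [Set.mem_smul_set_iff_inv_smul_mem₀ hH.ne']
    have hAx : ∀ i, A (H⁻¹ • x) i = H⁻¹ * A x i := by
      intro i; rw [A.map_smul]; rfl
    simp only [hS, hQ, hAx, Set.mem_inter_iff, Set.mem_preimage, Set.mem_setOf_eq, LinearMap.map_smul,
      Set.mem_Icc, Pi.le_def, Pi.smul_apply, smul_eq_mul]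
    have h1 : ∀ i, (c i / H < H⁻¹ * A x i ↔ c i < A x i) := by
      intro i
      rw [div_eq_inv_mul]
      exact mul_lt_mul_iff_right₀ (inv_pos.mpr hH)
    have h2 : ∀ a : ℝ, ((-1:ℝ) ≤ H⁻¹ * a ↔ -H ≤ a) := by
      intro a
      rw [← div_eq_inv_mul, le_div_iff₀ hH]
      constructor <;> intro h <;> linarith
    have h3 : ∀ a : ℝ, (H⁻¹ * a ≤ 1 ↔ a ≤ H) := by
      intro a
      rw [← div_eq_inv_mul, div_le_one hH]
    constructor
    · rintro ⟨ha, hb, hc'⟩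
      exact ⟨fun i => (h1 i).mpr (ha i), fun j => (h2 _).mpr (hb j), fun j => (h3 _).mpr (hc' j)⟩
    · rintro ⟨ha, hb, hc'⟩
      exact ⟨fun i => (h1 i).mp (ha i), fun j => (h2 _).mp (hb j), fun j => (h3 _).mp (hc' j)⟩
  -- finish
  have hfin : ∀ᶠ H : ℝ in atTop,
      (volume (A ⁻¹' {y | ∀ i, c i < y i} ∩
        Set.Icc (fun _ => -H) (fun _ => H))).toReal / H ^ ℓ = (volume (S H)).toReal := by
    filter_upwards [eventually_gt_atTop (0:ℝ)] with H hH
    rw [hscale H hH, Measure.addHaar_smul_of_nonneg volume hH.le, Module.finrank_fin_fun,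
      ENNReal.toReal_mul, ENNReal.toReal_ofReal (pow_nonneg hH.le ℓ)]
    have hSfin : volume (S H) ≠ ⊤ := fun h =>
      hQfin (top_le_iff.mp (h ▸ measure_mono Set.inter_subset_right))
    field_simp
  refine Tendsto.congr' (hfin.mono fun H h => h.symm) ?_
  exact (ENNReal.tendsto_toReal hTfin).comp hmain
end

section
/- Let K be a number field and let L₁, L₂, L₃, L₄ : K² → K be K-linear forms that are pairwise linearly independent over K (for all i ≠ j, the pair (L_i, L_j) is K-linearly independent). For each real embedding τ : K → ℝ of K, fix a 2-element subset I_τ ⊆ {1, 2, 3, 4}. Then the family of ℚ-linear maps {τ ∘ L_i : K² → ℝ, for τ a real embedding of K and i ∈ I_τ} is linearly independent over ℝ, viewed inside the ℝ-vector space of ℚ-linear maps from K² to ℝ. -/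
/-- Let `K` be a number field and `L₁, L₂, L₃, L₄ : K² → K` pairwise linearly independent
`K`-linear forms.  For each real embedding `τ : K → ℝ` fix a two-element subset
`I_τ ⊆ {1, 2, 3, 4}`.  Then the family of `ℚ`-linear maps `τ ∘ Lᵢ : K² → ℝ`, for `τ` a real
embedding and `i ∈ I_τ`, is `ℝ`-linearly independent in the space of `ℚ`-linear maps
`K² → ℝ`. -/
theorem linearIndependent_real_embeddings_comp (K : Type*) [Field K] [NumberField K]
    (L : Fin 4 → (K × K) →ₗ[K] K)
    (hL : ∀ i j, i ≠ j → LinearIndependent K ![L i, L j])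
    (I : (K →+* ℝ) → Finset (Fin 4)) (hI : ∀ τ, (I τ).card = 2) :
    LinearIndependent ℝ
      (fun p : Σ τ : K →+* ℝ, {i : Fin 4 // i ∈ I τ} =>
        (((p.1.toAddMonoidHom.comp (L p.2.1).toAddMonoidHom).toRatLinearMap) :
          (K × K) →ₗ[ℚ] ℝ)) := by
  classical
  -- representation of linear forms
  have hrep : ∀ (M : (K × K) →ₗ[K] K) (v : K × K),
      M v = M (1, 0) * v.1 + M (0, 1) * v.2 := by
    intro M v
    have hv : v = v.1 • ((1 : K), (0 : K)) + v.2 • ((0 : K), (1 : K)) := by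
      ext <;> simp
    conv_lhs => rw [hv]
    simp only [map_add, map_smul, smul_eq_mul]
    ring
  set a : Fin 4 → K := fun i => L i (1, 0) with ha
  set b : Fin 4 → K := fun i => L i (0, 1) with hb
  have ha' : ∀ i, L i (1, 0) = a i := fun i => rfl
  have hb' : ∀ i, L i (0, 1) = b i := fun i => rfl
  have hdet : ∀ i j, i ≠ j → a i * b j - a j * b i ≠ 0 := by
    intro i j hij h0
    have hd : a i * b j = a j * b i := sub_eq_zero.mp h0
    rcases eq_or_ne (a j) 0 with haj | haj
    · rcases eq_or_ne (b j) 0 with hbj | hbj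
      · refine (hL i j hij).ne_zero 1 ?_
        simp only [Matrix.cons_val_one, Matrix.head_cons, Matrix.cons_val_zero]
        refine LinearMap.ext fun v => ?_
        rw [hrep (L j) v]
        simp only [ha', hb', haj, hbj]
        simp
      · have h2 : b j • L i + (-(b i)) • L j = 0 := by
          refine LinearMap.ext fun v => ?_
          simp only [LinearMap.add_apply, LinearMap.smul_apply, smul_eq_mul,
            LinearMap.zero_apply]
          rw [hrep (L i) v, hrep (L j) v]
          simp only [ha', hb']
          linear_combination v.1 * hd
        exact hbj ((LinearIndependent.pair_iff.mp (hL i j hij) _ _ h2).1)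
    · have h2 : a j • L i + (-(a i)) • L j = 0 := by
        refine LinearMap.ext fun v => ?_
        simp only [LinearMap.add_apply, LinearMap.smul_apply, smul_eq_mul,
          LinearMap.zero_apply]
        rw [hrep (L i) v, hrep (L j) v]
        simp only [ha', hb']
        linear_combination (-v.2) * hd
      exact haj ((LinearIndependent.pair_iff.mp (hL i j hij) _ _ h2).1)
  rw [Fintype.linearIndependent_iff]
  intro g hg
  have hgv : ∀ v : K × K,
      ∑ p : (Σ τ : K →+* ℝ, {i : Fin 4 // i ∈ I τ}), g p * p.1 (L p.2.1 v) = 0 := by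
    intro v
    have := LinearMap.congr_fun hg v
    simpa using this
  set c : (K →+* ℝ) → Fin 4 → ℝ :=
    fun τ i => if h : i ∈ I τ then g ⟨τ, ⟨i, h⟩⟩ else 0 with hc
  -- Dedekind independence of characters
  have li : LinearIndependent ℝ (fun τ : K →+* ℝ => (τ : K → ℝ)) := by
    refine (linearIndependent_monoidHom K ℝ).comp (fun τ : K →+* ℝ => (τ : K →* ℝ)) ?_
    intro σ σ' h
    ext x
    exact DFunLike.congr_fun h x
  have hchar : ∀ m : Fin 4 → K,
      (∀ x : K, ∑ p : (Σ τ : K →+* ℝ, {i : Fin 4 // i ∈ I τ}),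
        g p * (p.1 (m p.2.1) * p.1 x) = 0) →
      ∀ τ, ∑ i ∈ I τ, c τ i * τ (m i) = 0 := by
    intro m hm τ
    have h0 : ∑ σ : K →+* ℝ, (∑ i ∈ I σ, c σ i * σ (m i)) • ((σ : K → ℝ)) = 0 := by
      funext x
      simp only [Finset.sum_apply, Pi.smul_apply, smul_eq_mul, Pi.zero_apply]
      rw [← hm x, ← Finset.univ_sigma_univ, Finset.sum_sigma]
      refine Finset.sum_congr rfl fun σ _ => ?_
      have : ∀ j : {i : Fin 4 // i ∈ I σ},
          g ⟨σ, j⟩ * (σ (m j.1) * σ x) = c σ j.1 * σ (m j.1) * σ x := by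
        intro j
        simp [hc, j.2, mul_assoc]
      rw [Finset.sum_congr rfl (fun j _ => this j),
        Finset.sum_coe_sort (I σ) (fun i => c σ i * σ (m i) * σ x), Finset.sum_mul]
    exact Fintype.linearIndependent_iff.mp li _ h0 τ
  have hAz : ∀ τ, ∑ i ∈ I τ, c τ i * τ (a i) = 0 := by
    refine hchar a fun x => ?_
    rw [← hgv (x, 0)]
    refine Finset.sum_congr rfl fun p _ => ?_
    have h1 : L p.2.1 (x, 0) = a p.2.1 * x := by
      rw [hrep (L p.2.1) (x, 0)]; rw [ha' p.2.1]; ring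
    rw [h1, map_mul]
  have hBz : ∀ τ, ∑ i ∈ I τ, c τ i * τ (b i) = 0 := by
    refine hchar b fun x => ?_
    rw [← hgv (0, x)]
    refine Finset.sum_congr rfl fun p _ => ?_
    have h1 : L p.2.1 (0, x) = b p.2.1 * x := by
      rw [hrep (L p.2.1) (0, x)]; rw [hb' p.2.1]; ring
    rw [h1, map_mul]
  have hcz : ∀ (τ : K →+* ℝ) (k : Fin 4), k ∈ I τ → c τ k = 0 := by
    intro τ k hk
    obtain ⟨i, j, hij, hIτ⟩ := Finset.card_eq_two.mp (hI τ)
    have e1 : c τ i * τ (a i) + c τ j * τ (a j) = 0 := by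
      have := hAz τ; rwa [hIτ, Finset.sum_pair hij] at this
    have e2 : c τ i * τ (b i) + c τ j * τ (b j) = 0 := by
      have := hBz τ; rwa [hIτ, Finset.sum_pair hij] at this
    have hd : τ (a i) * τ (b j) - τ (a j) * τ (b i) ≠ 0 := by
      rw [← map_mul, ← map_mul, ← map_sub]
      exact fun h => hdet i j hij ((map_eq_zero_iff τ τ.injective).mp h)
    have hci : c τ i = 0 := by
      have h1 : c τ i * (τ (a i) * τ (b j) - τ (a j) * τ (b i)) = 0 := by
        linear_combination τ (b j) * e1 - τ (a j) * e2
      exact (mul_eq_zero.mp h1).resolve_right hd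
    have hcj : c τ j = 0 := by
      have h1 : c τ j * (τ (a i) * τ (b j) - τ (a j) * τ (b i)) = 0 := by
        linear_combination τ (a i) * e2 - τ (b i) * e1
      exact (mul_eq_zero.mp h1).resolve_right hd
    rw [hIτ] at hk
    rcases Finset.mem_insert.mp hk with h | h
    · rw [h]; exact hci
    · rw [Finset.mem_singleton.mp h]; exact hcj
  rintro ⟨τ, k, hk⟩
  have := hcz τ k hk
  simpa [hc, hk] using this
end
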